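/- arXiv:2309.09098 — 8 statements merged into one kernel-verified Lean document; each statement's English description precedes it below -/
import Mathlib

section
/- Let E be a finite set and let x : E → ℝ satisfy 0 ≤ x_e ≤ 1 for all e ∈ E. Then 1 − ∏_{e∈E}(1 − x_e) ≥ (1 − 1/e) · min(1, Σ_{e∈E} x_e), where e denotes Euler's number. (In particular, ∏_{e∈E}(1 − x_e) ≤ exp(−Σ_{e∈E} x_e).) -/
theorem stmt_0 {α : Type*} (E : Finset α) (x : α → ℝ)
    (hx : ∀ e ∈ E, 0 ≤ x e ∧ x e ≤ 1) :
    1 - ∏ e ∈ E, (1 - x e) ≥ (1 - 1 / Real.exp 1) * min 1 (∑ e ∈ E, x e) ∧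
    ∏ e ∈ E, (1 - x e) ≤ Real.exp (-∑ e ∈ E, x e) := by
  set s := ∑ e ∈ E, x e with hs
  have hprod : ∏ e ∈ E, (1 - x e) ≤ Real.exp (-s) := by
    have h1 : ∏ e ∈ E, (1 - x e) ≤ ∏ e ∈ E, Real.exp (-x e) := by
      apply Finset.prod_le_prod
      · intro e he; linarith [(hx e he).2]
      · intro e he
        have := Real.add_one_le_exp (-x e)
        linarith
    have h2 : ∏ e ∈ E, Real.exp (-x e) = Real.exp (-s) := by
      rw [← Real.exp_sum, hs, ← Finset.sum_neg_distrib]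
    linarith [h1, h2.le, h2.ge]
  refine ⟨?_, hprod⟩
  have hs0 : 0 ≤ s := Finset.sum_nonneg fun e he => (hx e he).1
  have hexp1 : Real.exp (-1) = 1 / Real.exp 1 := by
    rw [Real.exp_neg]; ring
  rcases le_or_gt 1 s with h | h
  · have hmin : min 1 s = 1 := min_eq_left h
    have : Real.exp (-s) ≤ Real.exp (-1) := Real.exp_le_exp.mpr (by linarith)
    rw [hmin]
    rw [hexp1] at this
    linarith
  · have hmin : min 1 s = s := min_eq_right h.le
    -- convexity of exp: exp(-s) ≤ (1-s) * exp 0 + s * exp (-1)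
    have hconv := convexOn_exp.2 (Set.mem_univ (0:ℝ)) (Set.mem_univ (-1:ℝ))
      (by linarith : (0:ℝ) ≤ 1 - s) hs0 (by ring : (1 - s) + s = 1)
    simp only [smul_eq_mul, mul_zero, zero_add, Real.exp_zero] at hconv
    have hc : Real.exp (-s) ≤ (1 - s) + s * Real.exp (-1) := by
      have : (1 - s) * 0 + s * (-1) = -s := by ring
      calc Real.exp (-s) = Real.exp ((1 - s) * 0 + s * (-1)) := by rw [this]
        _ ≤ (1 - s) * Real.exp 0 + s * Real.exp (-1) := by
            simpa [smul_eq_mul] using hconv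
        _ = (1 - s) + s * Real.exp (-1) := by rw [Real.exp_zero]; ring
    rw [hmin, hexp1] at *
    nlinarith [hprod, hc]
end

section
/- Let E be a finite set, let F be a finite index set, and for each f ∈ F let E_f ⊆ E and w_f ≥ 0. Let x : E → [0,1], and let X = (X_e)_{e∈E} be a random vector with values in {0,1}^E satisfying: (P1) E[X_e] = x_e for every e ∈ E, and (P3) for every f ∈ F and every subset S ⊆ E_f, Pr[X_e = 0 for all e ∈ S] ≤ ∏_{e∈S} Pr[X_e = 0]. Then E[ Σ_{f∈F} w_f · 1{∃ e ∈ E_f with X_e = 1} ] ≥ (1 − 1/e) · Σ_{f∈F} w_f · min(1, Σ_{e∈E_f} x_e). -/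
open MeasureTheory

lemma stmt3_chord (s : ℝ) (h0 : 0 ≤ s) (h1 : s ≤ 1) :
    Real.exp (-s) ≤ 1 - s + s * Real.exp (-1) := by
  have := convexOn_exp.2 (Set.mem_univ (0:ℝ)) (Set.mem_univ (-1:ℝ))
    (by linarith : (0:ℝ) ≤ 1 - s) h0 (by ring)
  simp only [smul_eq_mul, mul_zero, zero_add, Real.exp_zero, mul_one] at this
  calc Real.exp (-s) = Real.exp ((1 - s) * 0 + s * (-1)) := by ring_nf
    _ ≤ (1 - s) + s * Real.exp (-1) := by
        simpa [Real.exp_zero] using this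
    _ = 1 - s + s * Real.exp (-1) := by ring

lemma stmt3_key {α : Type*} (S : Finset α) (x : α → ℝ)
    (hx : ∀ e ∈ S, 0 ≤ x e ∧ x e ≤ 1) :
    (1 - 1 / Real.exp 1) * min 1 (∑ e ∈ S, x e) ≤ 1 - ∏ e ∈ S, (1 - x e) := by
  set s := ∑ e ∈ S, x e with hs
  have hs0 : 0 ≤ s := Finset.sum_nonneg fun e he => (hx e he).1
  have hexpneg : Real.exp (-1) = 1 / Real.exp 1 := by
    rw [Real.exp_neg]; ring
  have hprod : ∏ e ∈ S, (1 - x e) ≤ Real.exp (-s) := by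
    have : Real.exp (-s) = ∏ e ∈ S, Real.exp (-(x e)) := by
      rw [← Real.exp_sum]; simp [hs]
    rw [this]
    apply Finset.prod_le_prod
    · intro e he; linarith [(hx e he).2]
    · intro e he
      have := Real.add_one_le_exp (-(x e))
      linarith
  rcases le_total 1 s with h1 | h1
  · rw [min_eq_left h1]
    have h2 : Real.exp (-s) ≤ Real.exp (-1) := Real.exp_le_exp.2 (by linarith)
    rw [hexpneg] at h2
    linarith
  · rw [min_eq_right h1]
    have hch := stmt3_chord s hs0 h1
    rw [hexpneg] at hch
    have he1 : (1:ℝ) ≤ Real.exp 1 := by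
      have := Real.add_one_le_exp (1:ℝ); linarith
    have hle : 1 / Real.exp 1 ≤ 1 := by
      rw [div_le_one (by linarith)]; linarith
    nlinarith

theorem stmt_3 {α β Ω : Type*} [Fintype α] [Fintype β] [MeasurableSpace Ω]
    (μ : Measure Ω) [IsProbabilityMeasure μ]
    (Ef : β → Finset α) (w : β → ℝ) (hw : ∀ f, 0 ≤ w f)
    (x : α → ℝ) (hx : ∀ e, 0 ≤ x e ∧ x e ≤ 1)
    (X : α → Ω → ℝ) (hXmeas : ∀ e, Measurable (X e))
    (hXbin : ∀ e ω, X e ω = 0 ∨ X e ω = 1)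
    (hP1 : ∀ e, ∫ ω, X e ω ∂μ = x e)
    (hP3 : ∀ f : β, ∀ S ⊆ Ef f,
      (μ {ω | ∀ e ∈ S, X e ω = 0}).toReal ≤ ∏ e ∈ S, (μ {ω | X e ω = 0}).toReal) :
    ∫ ω, ∑ f, w f * ({ω' | ∃ e ∈ Ef f, X e ω' = 1}.indicator (fun _ => (1:ℝ)) ω) ∂μ
      ≥ (1 - 1 / Real.exp 1) * ∑ f, w f * min 1 (∑ e ∈ Ef f, x e) := by
  -- measurability of {X e = 1}
  have hm1 : ∀ e, MeasurableSet {ω | X e ω = 1} := fun e =>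
    hXmeas e (measurableSet_singleton 1)
  have hm0 : ∀ e, MeasurableSet {ω | X e ω = 0} := fun e =>
    hXmeas e (measurableSet_singleton 0)
  -- Pr[X e = 1] = x e
  have hPr1 : ∀ e, (μ {ω | X e ω = 1}).toReal = x e := by
    intro e
    rw [← hP1 e]
    have : (fun ω => X e ω) =
        Set.indicator {ω | X e ω = 1} (fun _ => (1:ℝ)) := by
      funext ω
      rcases hXbin e ω with h | h
      · simp [Set.indicator_apply, Set.mem_setOf_eq, h]
      · simp [Set.indicator_apply, Set.mem_setOf_eq, h]
    rw [this, integral_indicator_const (1:ℝ) (hm1 e)]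
    simp [Measure.real]
  -- Pr[X e = 0] = 1 - x e
  have hcompl0 : ∀ e, {ω | X e ω = 0} = {ω | X e ω = 1}ᶜ := by
    intro e; ext ω
    simp only [Set.mem_setOf_eq, Set.mem_compl_iff]
    constructor
    · intro h h1; rw [h] at h1; norm_num at h1
    · intro h; rcases hXbin e ω with h0 | h1
      · exact h0
      · exact absurd h1 h
  have hPr0 : ∀ e, (μ {ω | X e ω = 0}).toReal = 1 - x e := by
    intro e
    rw [hcompl0 e, prob_compl_eq_one_sub (hm1 e),
      ENNReal.toReal_sub_of_le prob_le_one (by simp), hPr1 e]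
    simp
  -- the "covered" event and its measure
  set A : β → Set Ω := fun f => {ω' | ∃ e ∈ Ef f, X e ω' = 1} with hA
  have hAmeas : ∀ f, MeasurableSet (A f) := by
    intro f
    have : A f = ⋃ e ∈ Ef f, {ω | X e ω = 1} := by
      ext ω; simp [hA]
    rw [this]
    exact MeasurableSet.biUnion (Ef f).countable_toSet fun e _ => hm1 e
  have hAcompl : ∀ f, (A f)ᶜ = {ω | ∀ e ∈ Ef f, X e ω = 0} := by
    intro f; ext ω
    simp only [hA, Set.mem_compl_iff, Set.mem_setOf_eq]
    push_neg
    constructor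
    · intro h e he
      rcases hXbin e ω with h0 | h1
      · exact h0
      · exact absurd h1 (h e he)
    · intro h e he h1
      rw [h e he] at h1; norm_num at h1
  have hPrA : ∀ f, (1 - 1 / Real.exp 1) * min 1 (∑ e ∈ Ef f, x e)
      ≤ (μ (A f)).toReal := by
    intro f
    have hc : (μ (A f)ᶜ).toReal = 1 - (μ (A f)).toReal := by
      rw [prob_compl_eq_one_sub (hAmeas f),
        ENNReal.toReal_sub_of_le prob_le_one (by simp)]
      simp
    have h3 : (μ (A f)ᶜ).toReal ≤ ∏ e ∈ Ef f, (1 - x e) := by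
      rw [hAcompl f]
      calc (μ {ω | ∀ e ∈ Ef f, X e ω = 0}).toReal
          ≤ ∏ e ∈ Ef f, (μ {ω | X e ω = 0}).toReal := hP3 f (Ef f) le_rfl
        _ = ∏ e ∈ Ef f, (1 - x e) := Finset.prod_congr rfl fun e _ => hPr0 e
    have hk := stmt3_key (Ef f) x (fun e _ => hx e)
    linarith
  -- integrability and integral computation
  have hint : ∀ f, Integrable
      (fun ω => w f * (A f).indicator (fun _ => (1:ℝ)) ω) μ := by
    intro f
    exact ((integrable_const (1:ℝ)).indicator (hAmeas f)).const_mul (w f)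
  rw [integral_finset_sum Finset.univ (fun f _ => hint f)]
  have heach : ∀ f, ∫ ω, w f * (A f).indicator (fun _ => (1:ℝ)) ω ∂μ
      = w f * (μ (A f)).toReal := by
    intro f
    rw [integral_const_mul, integral_indicator_const (1:ℝ) (hAmeas f)]
    simp [Measure.real]
  rw [Finset.mul_sum]
  apply Finset.sum_le_sum
  intro f _
  rw [heach f]
  have h1e : 0 ≤ 1 - 1 / Real.exp 1 := by
    have he1 : (1:ℝ) ≤ Real.exp 1 := by
      have := Real.add_one_le_exp (1:ℝ); linarith
    have : 1 / Real.exp 1 ≤ 1 := by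
      rw [div_le_one (by linarith)]; linarith
    linarith
  calc (1 - 1 / Real.exp 1) * (w f * min 1 (∑ e ∈ Ef f, x e))
      = w f * ((1 - 1 / Real.exp 1) * min 1 (∑ e ∈ Ef f, x e)) := by ring
    _ ≤ w f * (μ (A f)).toReal := by
        exact mul_le_mul_of_nonneg_left (hPrA f) (hw f)
end

section
/- For a nonnegative integer q define H(q) = ∫₀¹ e^{−ζ} · ( Σ_{ℓ=0}^{q} e^{−qζ}(qζ)^ℓ/ℓ! ) dζ. Then for every nonnegative integer q, H(q) ≥ (19 − 67·e^{−3})/27, and the minimum over nonnegative integers is attained at q = 2. -/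
/-- `H q = ∫₀¹ e^{-ζ} Pr[Pois(qζ) ≤ q] dζ`. -/
noncomputable def H (q : ℕ) : ℝ :=
  ∫ ζ in (0:ℝ)..1, Real.exp (-ζ) *
    ∑ ℓ ∈ Finset.range (q + 1),
      Real.exp (-((q : ℝ) * ζ)) * ((q : ℝ) * ζ) ^ ℓ / (Nat.factorial ℓ : ℝ)

open Real Finset

lemma hasDerivAt_expSum (a : ℝ) (q : ℕ) (ζ : ℝ) :
    HasDerivAt (fun x : ℝ => ∑ j ∈ Finset.range (q + 1), (a * x) ^ j / (Nat.factorial j : ℝ))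
      (a * ∑ j ∈ Finset.range q, (a * ζ) ^ j / (Nat.factorial j : ℝ)) ζ := by
  have h : ∀ j ∈ Finset.range (q + 1),
      HasDerivAt (fun x : ℝ => (a * x) ^ j / (Nat.factorial j : ℝ))
        ((j : ℝ) * (a * ζ) ^ (j - 1) * a / (Nat.factorial j : ℝ)) ζ := by
    intro j _
    have h1 : HasDerivAt (fun x : ℝ => a * x) a ζ := by
      simpa using (hasDerivAt_id ζ).const_mul a
    exact (h1.pow j).div_const _
  have hsum := HasDerivAt.fun_sum h
  convert hsum using 1
  · rfl
  · rfl
  rw [Finset.sum_range_succ']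
  simp only [Nat.cast_zero, zero_mul, zero_div, add_zero, Nat.factorial_zero]
  rw [Finset.mul_sum]
  refine Finset.sum_congr rfl fun j _ => ?_
  have hfac : ((Nat.factorial (j + 1) : ℝ)) = (j + 1 : ℝ) * (Nat.factorial j : ℝ) := by
    rw [Nat.factorial_succ]; push_cast; ring
  have hne : (Nat.factorial j : ℝ) ≠ 0 := by exact_mod_cast (Nat.factorial_pos j).ne'
  simp only [Nat.add_sub_cancel, Nat.cast_add, Nat.cast_one, hfac]
  field_simp


lemma H_closed (q : ℕ) :
    H q = 1 - ((q : ℝ) / ((q : ℝ) + 1)) ^ (q + 1)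
      + Real.exp (-((q : ℝ) + 1)) *
        (((q : ℝ) / ((q : ℝ) + 1)) ^ (q + 1) *
            ∑ j ∈ Finset.range (q + 1), ((q : ℝ) + 1) ^ j / (Nat.factorial j : ℝ)
          - ∑ j ∈ Finset.range (q + 1), (q : ℝ) ^ j / (Nat.factorial j : ℝ)) := by
  set c : ℝ := (q : ℝ) + 1 with hc
  set r : ℝ := ((q : ℝ) / c) ^ (q + 1) with hr
  have hc0 : (0 : ℝ) < c := by positivity
  have hkey : r * c ^ (q + 1) = (q : ℝ) ^ (q + 1) := by
    rw [hr, div_pow, div_mul_cancel₀]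
    positivity
  set G : ℝ → ℝ := fun x => Real.exp (-(c * x)) *
      (r * ∑ j ∈ Finset.range (q + 1), (c * x) ^ j / (Nat.factorial j : ℝ)
        - ∑ j ∈ Finset.range (q + 1), ((q : ℝ) * x) ^ j / (Nat.factorial j : ℝ)) with hG
  have hcont : Continuous fun ζ : ℝ => Real.exp (-ζ) *
      ∑ ℓ ∈ Finset.range (q + 1),
        Real.exp (-((q : ℝ) * ζ)) * ((q : ℝ) * ζ) ^ ℓ / (Nat.factorial ℓ : ℝ) := by
    apply Continuous.mul (by fun_prop)
    apply continuous_finset_sum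
    intro i _
    fun_prop
  have hderiv : ∀ ζ ∈ Set.uIcc (0 : ℝ) 1, HasDerivAt G
      (Real.exp (-ζ) * ∑ ℓ ∈ Finset.range (q + 1),
        Real.exp (-((q : ℝ) * ζ)) * ((q : ℝ) * ζ) ^ ℓ / (Nat.factorial ℓ : ℝ)) ζ := by
    intro ζ _
    have he : HasDerivAt (fun x : ℝ => Real.exp (-(c * x))) (Real.exp (-(c * ζ)) * (-c)) ζ := by
      have h1 : HasDerivAt (fun x : ℝ => -(c * x)) (-c) ζ := by
        simpa using ((hasDerivAt_id ζ).const_mul c).fun_neg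
      exact h1.exp
    have h1 := (hasDerivAt_expSum c q ζ).const_mul r
    have h2 := hasDerivAt_expSum (q : ℝ) q ζ
    have hp := h1.fun_sub h2
    have hfull := he.fun_mul hp
    convert hfull using 1
    · rfl
    · rfl
    have hsum : (∑ ℓ ∈ Finset.range (q + 1),
        Real.exp (-((q : ℝ) * ζ)) * ((q : ℝ) * ζ) ^ ℓ / (Nat.factorial ℓ : ℝ))
        = Real.exp (-((q : ℝ) * ζ)) *
          ∑ ℓ ∈ Finset.range (q + 1), ((q : ℝ) * ζ) ^ ℓ / (Nat.factorial ℓ : ℝ) := by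
      rw [Finset.mul_sum]
      exact Finset.sum_congr rfl fun ℓ _ => by ring
    rw [hsum]
    have hee : Real.exp (-ζ) * Real.exp (-((q : ℝ) * ζ)) = Real.exp (-(c * ζ)) := by
      rw [← Real.exp_add]; congr 1; rw [hc]; ring
    rw [Finset.sum_range_succ, Finset.sum_range_succ]
    have hq1 : (0:ℝ) ≤ (q:ℝ) := by positivity
    rw [← mul_assoc, hee]
    have hmp1 : (c * ζ) ^ q = c ^ q * ζ ^ q := mul_pow c ζ q
    have hmp2 : ((q : ℝ) * ζ) ^ q = (q : ℝ) ^ q * ζ ^ q := mul_pow _ ζ q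
    rw [hmp1, hmp2]
    have hfe : (Nat.factorial q : ℝ) ≠ 0 := by exact_mod_cast (Nat.factorial_pos q).ne'
    rw [hc] at hkey ⊢
    linear_combination (Real.exp (-((((q:ℝ)+1)) * ζ)) * ζ ^ q / (Nat.factorial q : ℝ)) * hkey
  have hint := intervalIntegral.integral_eq_sub_of_hasDerivAt hderiv
    (hcont.intervalIntegrable 0 1)
  rw [H, hint, hG]
  have hzero : ∑ j ∈ Finset.range (q + 1), (0:ℝ) ^ j / (Nat.factorial j : ℝ) = 1 := by
    rw [Finset.sum_eq_single_of_mem 0 (Finset.mem_range.mpr (Nat.succ_pos q))]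
    · norm_num
    · intro j _ hj
      simp [zero_pow hj]
  simp only [mul_zero, mul_one, neg_zero, Real.exp_zero, hzero]
  ring

noncomputable def aQ (q : ℕ) : ℝ :=
  Real.exp (-(q : ℝ)) * (q : ℝ) ^ q / (Nat.factorial q : ℝ)

lemma exp_pow_le (q : ℕ) (hq : 1 ≤ q) (x : ℝ) (hx : (q : ℝ) ≤ x) :
    Real.exp (-x) * x ^ q ≤ Real.exp (-(q : ℝ)) * (q : ℝ) ^ q := by
  have hq0 : (0 : ℝ) < (q : ℝ) := by exact_mod_cast hq
  have h1 : x / q ≤ Real.exp ((x - q) / q) := by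
    have h := Real.add_one_le_exp ((x - (q : ℝ)) / (q : ℝ))
    have heq : (x - (q : ℝ)) / (q : ℝ) + 1 = x / q := by field_simp; ring
    linarith [heq ▸ h]
  have h2 : (x / q) ^ q ≤ Real.exp (x - (q : ℝ)) := by
    have hx0 : (0:ℝ) ≤ x := le_trans hq0.le hx
    calc (x / q) ^ q ≤ (Real.exp ((x - q) / q)) ^ q := by
          apply pow_le_pow_left₀ (div_nonneg hx0 hq0.le) h1
      _ = Real.exp (x - (q : ℝ)) := by
          rw [← Real.exp_nat_mul]; congr 1; field_simp
  have h3 : x ^ q ≤ (q : ℝ) ^ q * Real.exp (x - (q : ℝ)) := by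
    rw [div_pow] at h2
    rw [div_le_iff₀ (by positivity)] at h2
    linarith
  have h4 : Real.exp (-x) * Real.exp (x - (q : ℝ)) = Real.exp (-(q : ℝ)) := by
    rw [← Real.exp_add]; ring_nf
  calc Real.exp (-x) * x ^ q ≤ Real.exp (-x) * ((q : ℝ) ^ q * Real.exp (x - (q : ℝ))) := by
        apply mul_le_mul_of_nonneg_left h3 (Real.exp_pos _).le
    _ = Real.exp (-(q : ℝ)) * (q : ℝ) ^ q := by rw [← h4]; ring

lemma f_hasDerivAt (q : ℕ) (x : ℝ) :
    HasDerivAt (fun y : ℝ => Real.exp (-y) * ∑ j ∈ Finset.range (q + 1), y ^ j / (Nat.factorial j : ℝ))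
      (-(Real.exp (-x) * x ^ q / (Nat.factorial q : ℝ))) x := by
  have hs := hasDerivAt_expSum 1 q x
  simp only [one_mul] at hs
  have he : HasDerivAt (fun y : ℝ => Real.exp (-y)) (-Real.exp (-x)) x := by
    simpa using (hasDerivAt_neg x).exp
  have := he.fun_mul hs
  convert this using 1
  · rfl
  · rfl
  rw [Finset.sum_range_succ]
  ring

lemma tail_diff (q : ℕ) (hq : 1 ≤ q) :
    Real.exp (-(q : ℝ)) * ∑ j ∈ Finset.range (q + 1), (q : ℝ) ^ j / (Nat.factorial j : ℝ)
      - Real.exp (-((q : ℝ) + 1)) * ∑ j ∈ Finset.range (q + 1), ((q : ℝ) + 1) ^ j / (Nat.factorial j : ℝ)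
      ≤ aQ q := by
  set g : ℝ → ℝ := fun y =>
    Real.exp (-y) * ∑ j ∈ Finset.range (q + 1), y ^ j / (Nat.factorial j : ℝ) + y * aQ q with hgdef
  have hg : ∀ x : ℝ, HasDerivAt g (aQ q - Real.exp (-x) * x ^ q / (Nat.factorial q : ℝ)) x := by
    intro x
    have h1 := (f_hasDerivAt q x).fun_add ((hasDerivAt_id x).mul_const (aQ q))
    convert h1 using 1
    · rfl
    · rfl
    · rfl
    ring
  have hmono : MonotoneOn g (Set.Icc (q : ℝ) ((q : ℝ) + 1)) := by
    apply monotoneOn_of_deriv_nonneg (convex_Icc _ _)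
    · exact (fun x _ => (hg x).differentiableAt.continuousAt.continuousWithinAt)
    · intro x _
      exact (hg x).differentiableAt.differentiableWithinAt
    · intro x hx
      rw [interior_Icc] at hx
      rw [(hg x).deriv]
      have hkey := exp_pow_le q hq x hx.1.le
      have hfp : (0 : ℝ) < (Nat.factorial q : ℝ) := by exact_mod_cast Nat.factorial_pos q
      rw [aQ, sub_nonneg]
      exact (div_le_div_iff_of_pos_right hfp).mpr hkey
  have h1 : (q : ℝ) ∈ Set.Icc (q : ℝ) ((q : ℝ) + 1) := by
    constructor <;> [exact le_refl _; linarith]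
  have h2 : (q : ℝ) + 1 ∈ Set.Icc (q : ℝ) ((q : ℝ) + 1) := by
    constructor <;> [linarith; exact le_refl _]
  have := hmono h1 h2 (by linarith)
  simp only [hgdef] at this
  linarith

lemma aQ_nonneg (q : ℕ) : 0 ≤ aQ q := by rw [aQ]; positivity

lemma aQ_step (q : ℕ) (hq : 1 ≤ q) : aQ (q + 1) ≤ aQ q := by
  have hq0 : (0 : ℝ) < (q : ℝ) := by exact_mod_cast hq
  have h1 : ((q : ℝ) + 1) / q ≤ Real.exp (1 / q) := by
    have h := Real.add_one_le_exp (1 / (q : ℝ))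
    have heq : 1 / (q : ℝ) + 1 = ((q : ℝ) + 1) / q := by field_simp; try ring
    linarith [heq ▸ h]
  have h2 : (((q : ℝ) + 1) / q) ^ q ≤ Real.exp 1 := by
    calc (((q : ℝ) + 1) / q) ^ q ≤ (Real.exp (1 / q)) ^ q :=
          pow_le_pow_left₀ (by positivity) h1 q
      _ = Real.exp 1 := by rw [← Real.exp_nat_mul]; congr 1; field_simp
  have h3 : ((q : ℝ) + 1) ^ q ≤ Real.exp 1 * (q : ℝ) ^ q := by
    rw [div_pow, div_le_iff₀ (by positivity)] at h2
    linarith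
  have hfac : ((Nat.factorial (q + 1) : ℝ)) = ((q : ℝ) + 1) * (Nat.factorial q : ℝ) := by
    rw [Nat.factorial_succ]; push_cast; ring
  have hfp : (0 : ℝ) < (Nat.factorial q : ℝ) := by exact_mod_cast Nat.factorial_pos q
  have hexp1 : Real.exp (-1) * Real.exp 1 = 1 := by rw [← Real.exp_add]; norm_num
  have key : Real.exp (-((q:ℝ)+1)) * ((q:ℝ)+1) ^ (q+1)
      ≤ Real.exp (-(q:ℝ)) * (q:ℝ) ^ q * ((q:ℝ)+1) := by
    rw [show Real.exp (-((q:ℝ)+1)) = Real.exp (-(q:ℝ)) * Real.exp (-1) by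
        rw [← Real.exp_add]; congr 1; ring,
      show ((q:ℝ)+1) ^ (q+1) = ((q:ℝ)+1) ^ q * ((q:ℝ)+1) by ring]
    calc Real.exp (-(q:ℝ)) * Real.exp (-1) * (((q:ℝ)+1) ^ q * ((q:ℝ)+1))
        ≤ Real.exp (-(q:ℝ)) * Real.exp (-1) * ((Real.exp 1 * (q:ℝ) ^ q) * ((q:ℝ)+1)) := by
          have h4 : ((q:ℝ)+1) ^ q * ((q:ℝ)+1) ≤ (Real.exp 1 * (q:ℝ) ^ q) * ((q:ℝ)+1) :=
            mul_le_mul_of_nonneg_right h3 (by positivity)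
          exact mul_le_mul_of_nonneg_left h4 (by positivity)
      _ = Real.exp (-(q:ℝ)) * (q:ℝ) ^ q * ((q:ℝ)+1) := by
          linear_combination (Real.exp (-(q:ℝ)) * (q:ℝ) ^ q * ((q:ℝ)+1)) * hexp1
  rw [aQ, aQ, div_le_div_iff₀ (by positivity) (by positivity)]
  push_cast
  rw [hfac]
  nlinarith [mul_le_mul_of_nonneg_right key hfp.le]

lemma aQ_le_nine (q : ℕ) (hq : 9 ≤ q) : aQ q ≤ aQ 9 := by
  induction q, hq using Nat.le_induction with
  | base => exact le_refl _
  | succ n hn ih => exact le_trans (aQ_step n (by omega)) ih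

lemma H_ge (q : ℕ) (hq : 1 ≤ q) :
    1 - Real.exp (-1) - Real.exp (-1) * aQ q ≤ H q := by
  rw [H_closed q]
  set Sq : ℝ := ∑ j ∈ Finset.range (q + 1), (q : ℝ) ^ j / (Nat.factorial j : ℝ) with hSq
  set Sc : ℝ := ∑ j ∈ Finset.range (q + 1), ((q : ℝ) + 1) ^ j / (Nat.factorial j : ℝ) with hSc
  set r : ℝ := ((q : ℝ) / ((q : ℝ) + 1)) ^ (q + 1) with hrdef
  have hq0 : (0 : ℝ) < (q : ℝ) := by exact_mod_cast hq
  have hSc0 : 0 ≤ Sc := Finset.sum_nonneg fun j _ => by positivity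
  have hSq0 : 0 ≤ Sq := Finset.sum_nonneg fun j _ => by positivity
  have hrle : r ≤ Real.exp (-1) := by
    have h1 : (q : ℝ) / ((q : ℝ) + 1) ≤ Real.exp (-(1 / ((q : ℝ) + 1))) := by
      have h := Real.add_one_le_exp (-(1 / ((q : ℝ) + 1)))
      have heq : -(1 / ((q : ℝ) + 1)) + 1 = (q : ℝ) / ((q : ℝ) + 1) := by
        field_simp; ring
      linarith [heq ▸ h]
    calc r ≤ (Real.exp (-(1 / ((q : ℝ) + 1)))) ^ (q + 1) :=
          pow_le_pow_left₀ (by positivity) h1 _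
      _ = Real.exp (-1) := by
          rw [← Real.exp_nat_mul]; congr 1; push_cast; field_simp
  have hu1 : Real.exp (-((q : ℝ) + 1)) * Sc ≤ 1 := by
    have h := Real.sum_le_exp_of_nonneg (x := (q : ℝ) + 1) (by positivity) (q + 1)
    calc Real.exp (-((q : ℝ) + 1)) * Sc ≤ Real.exp (-((q : ℝ) + 1)) * Real.exp ((q : ℝ) + 1) :=
          mul_le_mul_of_nonneg_left h (Real.exp_pos _).le
      _ = 1 := by rw [← Real.exp_add]; rw [show -((q:ℝ)+1) + ((q:ℝ)+1) = 0 by ring, Real.exp_zero]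
  have hD := tail_diff q hq
  have key1 : r * (1 - Real.exp (-((q : ℝ) + 1)) * Sc)
      ≤ Real.exp (-1) * (1 - Real.exp (-((q : ℝ) + 1)) * Sc) :=
    mul_le_mul_of_nonneg_right hrle (by linarith)
  have key2 : Real.exp (-((q : ℝ) + 1)) * Sq = Real.exp (-1) * (Real.exp (-(q : ℝ)) * Sq) := by
    rw [← mul_assoc, ← Real.exp_add]; congr 2; ring
  have key3 : Real.exp (-1) * (Real.exp (-(q : ℝ)) * Sq)
      ≤ Real.exp (-1) * (aQ q + Real.exp (-((q : ℝ) + 1)) * Sc) :=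
    mul_le_mul_of_nonneg_left (by rw [hSq, hSc]; linarith [hD]) (Real.exp_pos _).le
  nlinarith [key1, key2, key3]

lemma x_lb : (0.36787 : ℝ) < Real.exp (-1) := by
  rw [Real.exp_neg]
  have h := Real.exp_one_lt_d9
  have hpos : (0 : ℝ) < Real.exp 1 := Real.exp_pos 1
  have hinv : Real.exp 1 * (Real.exp 1)⁻¹ = 1 := mul_inv_cancel₀ hpos.ne'
  nlinarith [inv_pos.mpr hpos]

lemma x_ub : Real.exp (-1) < (0.36788 : ℝ) := by
  rw [Real.exp_neg]
  have h := Real.exp_one_gt_d9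
  have hpos : (0 : ℝ) < Real.exp 1 := Real.exp_pos 1
  have hinv : Real.exp 1 * (Real.exp 1)⁻¹ = 1 := mul_inv_cancel₀ hpos.ne'
  nlinarith [inv_pos.mpr hpos]

lemma exp_neg_nat (n : ℕ) : Real.exp (-(n : ℝ)) = Real.exp (-1) ^ n := by
  rw [← Real.exp_nat_mul]; congr 1; ring

lemma large_numeric :
    (19 - 67 * Real.exp (-3)) / 27 ≤ 1 - Real.exp (-1) - Real.exp (-1) * aQ 9 := by
  have hx3 : Real.exp (-3 : ℝ) = Real.exp (-1) ^ 3 := by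
    rw [show (-3 : ℝ) = -((3 : ℕ) : ℝ) by norm_num]; exact exp_neg_nat 3
  have hx9 : Real.exp (-((9 : ℕ) : ℝ)) = Real.exp (-1) ^ 9 := exp_neg_nat 9
  rw [aQ, hx3, hx9]
  set x := Real.exp (-1) with hxdef
  have hxl := x_lb
  have hxu := x_ub
  have hx0 : (0 : ℝ) ≤ x := (Real.exp_pos _).le
  have p3 : (0.36787 : ℝ) ^ 3 ≤ x ^ 3 := pow_le_pow_left₀ (by norm_num) hxl.le 3
  have p10 : x ^ 10 ≤ (0.36788 : ℝ) ^ 10 := pow_le_pow_left₀ hx0 hxu.le 10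
  have hfac : ((Nat.factorial 9 : ℕ) : ℝ) = 362880 := by norm_num [Nat.factorial]
  have hcast : (((9 : ℕ) : ℝ)) ^ (9 : ℕ) = 387420489 := by norm_num
  rw [hfac, hcast]
  nlinarith [p3, p10]

set_option maxHeartbeats 1000000 in
lemma H_small_0 : (19 - 67 * Real.exp (-3)) / 27 ≤ H 0 := by
  have hxl := x_lb
  have hxu := x_ub
  have hx0 : (0 : ℝ) ≤ Real.exp (-1) := (Real.exp_pos _).le
  have e3 : Real.exp (-3 : ℝ) = Real.exp (-1) ^ 3 := by
    rw [show (-3 : ℝ) = -((3 : ℕ) : ℝ) by norm_num]; exact exp_neg_nat 3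
  have e1 : Real.exp (-1 : ℝ) = Real.exp (-1) ^ 1 := by ring
  have p3l : (0.36787 : ℝ) ^ 3 ≤ Real.exp (-1) ^ 3 := pow_le_pow_left₀ (by norm_num) hxl.le 3
  have p3u : Real.exp (-1) ^ 3 ≤ (0.36788 : ℝ) ^ 3 := pow_le_pow_left₀ hx0 hxu.le 3
  have p1l : (0.36787 : ℝ) ^ 1 ≤ Real.exp (-1) ^ 1 := pow_le_pow_left₀ (by norm_num) hxl.le 1
  have p1u : Real.exp (-1) ^ 1 ≤ (0.36788 : ℝ) ^ 1 := pow_le_pow_left₀ hx0 hxu.le 1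
  rw [H_closed 0]
  norm_num [Finset.sum_range_succ, Nat.factorial]
  rw [e3, e1]
  nlinarith [p3l, p3u, p1l, p1u]

set_option maxHeartbeats 1000000 in
lemma H_small_1 : (19 - 67 * Real.exp (-3)) / 27 ≤ H 1 := by
  have hxl := x_lb
  have hxu := x_ub
  have hx0 : (0 : ℝ) ≤ Real.exp (-1) := (Real.exp_pos _).le
  have e3 : Real.exp (-3 : ℝ) = Real.exp (-1) ^ 3 := by
    rw [show (-3 : ℝ) = -((3 : ℕ) : ℝ) by norm_num]; exact exp_neg_nat 3
  have e2 : Real.exp (-2 : ℝ) = Real.exp (-1) ^ 2 := by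
    rw [show (-2 : ℝ) = -((2 : ℕ) : ℝ) by norm_num]; exact exp_neg_nat 2
  have p3l : (0.36787 : ℝ) ^ 3 ≤ Real.exp (-1) ^ 3 := pow_le_pow_left₀ (by norm_num) hxl.le 3
  have p3u : Real.exp (-1) ^ 3 ≤ (0.36788 : ℝ) ^ 3 := pow_le_pow_left₀ hx0 hxu.le 3
  have p2l : (0.36787 : ℝ) ^ 2 ≤ Real.exp (-1) ^ 2 := pow_le_pow_left₀ (by norm_num) hxl.le 2
  have p2u : Real.exp (-1) ^ 2 ≤ (0.36788 : ℝ) ^ 2 := pow_le_pow_left₀ hx0 hxu.le 2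
  rw [H_closed 1]
  norm_num [Finset.sum_range_succ, Nat.factorial]
  rw [e3, e2]
  nlinarith [p3l, p3u, p2l, p2u]

set_option maxHeartbeats 1000000 in
lemma H_small_2 : (19 - 67 * Real.exp (-3)) / 27 ≤ H 2 := by
  have hxl := x_lb
  have hxu := x_ub
  have hx0 : (0 : ℝ) ≤ Real.exp (-1) := (Real.exp_pos _).le
  have e3 : Real.exp (-3 : ℝ) = Real.exp (-1) ^ 3 := by
    rw [show (-3 : ℝ) = -((3 : ℕ) : ℝ) by norm_num]; exact exp_neg_nat 3
  have p3l : (0.36787 : ℝ) ^ 3 ≤ Real.exp (-1) ^ 3 := pow_le_pow_left₀ (by norm_num) hxl.le 3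
  have p3u : Real.exp (-1) ^ 3 ≤ (0.36788 : ℝ) ^ 3 := pow_le_pow_left₀ hx0 hxu.le 3
  rw [H_closed 2]
  norm_num [Finset.sum_range_succ, Nat.factorial]
  rw [e3]
  nlinarith [p3l, p3u]

set_option maxHeartbeats 1000000 in
lemma H_small_3 : (19 - 67 * Real.exp (-3)) / 27 ≤ H 3 := by
  have hxl := x_lb
  have hxu := x_ub
  have hx0 : (0 : ℝ) ≤ Real.exp (-1) := (Real.exp_pos _).le
  have e3 : Real.exp (-3 : ℝ) = Real.exp (-1) ^ 3 := by
    rw [show (-3 : ℝ) = -((3 : ℕ) : ℝ) by norm_num]; exact exp_neg_nat 3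
  have e4 : Real.exp (-4 : ℝ) = Real.exp (-1) ^ 4 := by
    rw [show (-4 : ℝ) = -((4 : ℕ) : ℝ) by norm_num]; exact exp_neg_nat 4
  have p3l : (0.36787 : ℝ) ^ 3 ≤ Real.exp (-1) ^ 3 := pow_le_pow_left₀ (by norm_num) hxl.le 3
  have p3u : Real.exp (-1) ^ 3 ≤ (0.36788 : ℝ) ^ 3 := pow_le_pow_left₀ hx0 hxu.le 3
  have p4l : (0.36787 : ℝ) ^ 4 ≤ Real.exp (-1) ^ 4 := pow_le_pow_left₀ (by norm_num) hxl.le 4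
  have p4u : Real.exp (-1) ^ 4 ≤ (0.36788 : ℝ) ^ 4 := pow_le_pow_left₀ hx0 hxu.le 4
  rw [H_closed 3]
  norm_num [Finset.sum_range_succ, Nat.factorial]
  rw [e3, e4]
  nlinarith [p3l, p3u, p4l, p4u]

set_option maxHeartbeats 1000000 in
lemma H_small_4 : (19 - 67 * Real.exp (-3)) / 27 ≤ H 4 := by
  have hxl := x_lb
  have hxu := x_ub
  have hx0 : (0 : ℝ) ≤ Real.exp (-1) := (Real.exp_pos _).le
  have e3 : Real.exp (-3 : ℝ) = Real.exp (-1) ^ 3 := by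
    rw [show (-3 : ℝ) = -((3 : ℕ) : ℝ) by norm_num]; exact exp_neg_nat 3
  have e5 : Real.exp (-5 : ℝ) = Real.exp (-1) ^ 5 := by
    rw [show (-5 : ℝ) = -((5 : ℕ) : ℝ) by norm_num]; exact exp_neg_nat 5
  have p3l : (0.36787 : ℝ) ^ 3 ≤ Real.exp (-1) ^ 3 := pow_le_pow_left₀ (by norm_num) hxl.le 3
  have p3u : Real.exp (-1) ^ 3 ≤ (0.36788 : ℝ) ^ 3 := pow_le_pow_left₀ hx0 hxu.le 3
  have p5l : (0.36787 : ℝ) ^ 5 ≤ Real.exp (-1) ^ 5 := pow_le_pow_left₀ (by norm_num) hxl.le 5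
  have p5u : Real.exp (-1) ^ 5 ≤ (0.36788 : ℝ) ^ 5 := pow_le_pow_left₀ hx0 hxu.le 5
  rw [H_closed 4]
  norm_num [Finset.sum_range_succ, Nat.factorial]
  rw [e3, e5]
  nlinarith [p3l, p3u, p5l, p5u]

set_option maxHeartbeats 1000000 in
lemma H_small_5 : (19 - 67 * Real.exp (-3)) / 27 ≤ H 5 := by
  have hxl := x_lb
  have hxu := x_ub
  have hx0 : (0 : ℝ) ≤ Real.exp (-1) := (Real.exp_pos _).le
  have e3 : Real.exp (-3 : ℝ) = Real.exp (-1) ^ 3 := by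
    rw [show (-3 : ℝ) = -((3 : ℕ) : ℝ) by norm_num]; exact exp_neg_nat 3
  have e6 : Real.exp (-6 : ℝ) = Real.exp (-1) ^ 6 := by
    rw [show (-6 : ℝ) = -((6 : ℕ) : ℝ) by norm_num]; exact exp_neg_nat 6
  have p3l : (0.36787 : ℝ) ^ 3 ≤ Real.exp (-1) ^ 3 := pow_le_pow_left₀ (by norm_num) hxl.le 3
  have p3u : Real.exp (-1) ^ 3 ≤ (0.36788 : ℝ) ^ 3 := pow_le_pow_left₀ hx0 hxu.le 3
  have p6l : (0.36787 : ℝ) ^ 6 ≤ Real.exp (-1) ^ 6 := pow_le_pow_left₀ (by norm_num) hxl.le 6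
  have p6u : Real.exp (-1) ^ 6 ≤ (0.36788 : ℝ) ^ 6 := pow_le_pow_left₀ hx0 hxu.le 6
  rw [H_closed 5]
  norm_num [Finset.sum_range_succ, Nat.factorial]
  rw [e3, e6]
  nlinarith [p3l, p3u, p6l, p6u]

set_option maxHeartbeats 1000000 in
lemma H_small_6 : (19 - 67 * Real.exp (-3)) / 27 ≤ H 6 := by
  have hxl := x_lb
  have hxu := x_ub
  have hx0 : (0 : ℝ) ≤ Real.exp (-1) := (Real.exp_pos _).le
  have e3 : Real.exp (-3 : ℝ) = Real.exp (-1) ^ 3 := by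
    rw [show (-3 : ℝ) = -((3 : ℕ) : ℝ) by norm_num]; exact exp_neg_nat 3
  have e7 : Real.exp (-7 : ℝ) = Real.exp (-1) ^ 7 := by
    rw [show (-7 : ℝ) = -((7 : ℕ) : ℝ) by norm_num]; exact exp_neg_nat 7
  have p3l : (0.36787 : ℝ) ^ 3 ≤ Real.exp (-1) ^ 3 := pow_le_pow_left₀ (by norm_num) hxl.le 3
  have p3u : Real.exp (-1) ^ 3 ≤ (0.36788 : ℝ) ^ 3 := pow_le_pow_left₀ hx0 hxu.le 3
  have p7l : (0.36787 : ℝ) ^ 7 ≤ Real.exp (-1) ^ 7 := pow_le_pow_left₀ (by norm_num) hxl.le 7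
  have p7u : Real.exp (-1) ^ 7 ≤ (0.36788 : ℝ) ^ 7 := pow_le_pow_left₀ hx0 hxu.le 7
  rw [H_closed 6]
  norm_num [Finset.sum_range_succ, Nat.factorial]
  rw [e3, e7]
  nlinarith [p3l, p3u, p7l, p7u]

set_option maxHeartbeats 1000000 in
lemma H_small_7 : (19 - 67 * Real.exp (-3)) / 27 ≤ H 7 := by
  have hxl := x_lb
  have hxu := x_ub
  have hx0 : (0 : ℝ) ≤ Real.exp (-1) := (Real.exp_pos _).le
  have e3 : Real.exp (-3 : ℝ) = Real.exp (-1) ^ 3 := by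
    rw [show (-3 : ℝ) = -((3 : ℕ) : ℝ) by norm_num]; exact exp_neg_nat 3
  have e8 : Real.exp (-8 : ℝ) = Real.exp (-1) ^ 8 := by
    rw [show (-8 : ℝ) = -((8 : ℕ) : ℝ) by norm_num]; exact exp_neg_nat 8
  have p3l : (0.36787 : ℝ) ^ 3 ≤ Real.exp (-1) ^ 3 := pow_le_pow_left₀ (by norm_num) hxl.le 3
  have p3u : Real.exp (-1) ^ 3 ≤ (0.36788 : ℝ) ^ 3 := pow_le_pow_left₀ hx0 hxu.le 3
  have p8l : (0.36787 : ℝ) ^ 8 ≤ Real.exp (-1) ^ 8 := pow_le_pow_left₀ (by norm_num) hxl.le 8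
  have p8u : Real.exp (-1) ^ 8 ≤ (0.36788 : ℝ) ^ 8 := pow_le_pow_left₀ hx0 hxu.le 8
  rw [H_closed 7]
  norm_num [Finset.sum_range_succ, Nat.factorial]
  rw [e3, e8]
  nlinarith [p3l, p3u, p8l, p8u]

set_option maxHeartbeats 1000000 in
lemma H_small_8 : (19 - 67 * Real.exp (-3)) / 27 ≤ H 8 := by
  have hxl := x_lb
  have hxu := x_ub
  have hx0 : (0 : ℝ) ≤ Real.exp (-1) := (Real.exp_pos _).le
  have e3 : Real.exp (-3 : ℝ) = Real.exp (-1) ^ 3 := by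
    rw [show (-3 : ℝ) = -((3 : ℕ) : ℝ) by norm_num]; exact exp_neg_nat 3
  have e9 : Real.exp (-9 : ℝ) = Real.exp (-1) ^ 9 := by
    rw [show (-9 : ℝ) = -((9 : ℕ) : ℝ) by norm_num]; exact exp_neg_nat 9
  have p3l : (0.36787 : ℝ) ^ 3 ≤ Real.exp (-1) ^ 3 := pow_le_pow_left₀ (by norm_num) hxl.le 3
  have p3u : Real.exp (-1) ^ 3 ≤ (0.36788 : ℝ) ^ 3 := pow_le_pow_left₀ hx0 hxu.le 3
  have p9l : (0.36787 : ℝ) ^ 9 ≤ Real.exp (-1) ^ 9 := pow_le_pow_left₀ (by norm_num) hxl.le 9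
  have p9u : Real.exp (-1) ^ 9 ≤ (0.36788 : ℝ) ^ 9 := pow_le_pow_left₀ hx0 hxu.le 9
  rw [H_closed 8]
  norm_num [Finset.sum_range_succ, Nat.factorial]
  rw [e3, e9]
  nlinarith [p3l, p3u, p9l, p9u]

lemma H_two : H 2 = (19 - 67 * Real.exp (-3)) / 27 := by
  rw [H_closed 2]
  norm_num [Finset.sum_range_succ, Nat.factorial]
  ring

theorem stmt_5 :
    (∀ q : ℕ, (19 - 67 * Real.exp (-3)) / 27 ≤ H q) ∧ (∀ q : ℕ, H 2 ≤ H q) := by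
  have part1 : ∀ q : ℕ, (19 - 67 * Real.exp (-3)) / 27 ≤ H q := by
    intro q
    rcases lt_or_ge q 9 with h | h
    · interval_cases q
      exacts [H_small_0, H_small_1, H_small_2, H_small_3, H_small_4, H_small_5,
        H_small_6, H_small_7, H_small_8]
    · calc (19 - 67 * Real.exp (-3)) / 27
          ≤ 1 - Real.exp (-1) - Real.exp (-1) * aQ 9 := large_numeric
        _ ≤ 1 - Real.exp (-1) - Real.exp (-1) * aQ q := by
            have h1 := mul_le_mul_of_nonneg_left (aQ_le_nine q h) (Real.exp_pos (-1)).le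
            linarith
        _ ≤ H q := H_ge q (by omega)
  exact ⟨part1, fun q => le_trans (le_of_eq H_two) (part1 q)⟩
end

section
/- Define H_L(q) = ∫₀¹ e^{−ζ} · (1 − exp(−q(1−ζ)²/2)) dζ for real q > 0. Then H_L is an increasing function of q on (0, ∞), and H_L(100) ≥ 0.582. -/
open Real MeasureTheory intervalIntegral

/-- `H_L q = ∫₀¹ e^{-ζ} (1 - e^{-q(1-ζ)²/2}) dζ`. -/
noncomputable def HL (q : ℝ) : ℝ :=
  ∫ ζ in (0:ℝ)..1, Real.exp (-ζ) * (1 - Real.exp (-(q * (1 - ζ) ^ 2 / 2)))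

lemma HL_cont (q : ℝ) :
    Continuous fun ζ : ℝ => Real.exp (-ζ) * (1 - Real.exp (-(q * (1 - ζ) ^ 2 / 2))) := by
  fun_prop

lemma HL_mono : MonotoneOn HL (Set.Ioi (0:ℝ)) := by
  intro a _ b _ hab
  unfold HL
  apply intervalIntegral.integral_mono_on (by norm_num)
    ((HL_cont a).intervalIntegrable _ _) ((HL_cont b).intervalIntegrable _ _)
  intro x _
  have h1 : (0:ℝ) ≤ Real.exp (-x) := (Real.exp_pos _).le
  have h2 : Real.exp (-(b * (1 - x) ^ 2 / 2)) ≤ Real.exp (-(a * (1 - x) ^ 2 / 2)) := by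
    apply Real.exp_le_exp.mpr
    nlinarith [sq_nonneg (1 - x)]
  have := mul_le_mul_of_nonneg_left (by linarith : (1 - Real.exp (-(a * (1 - x) ^ 2 / 2))) ≤ (1 - Real.exp (-(b * (1 - x) ^ 2 / 2)))) h1
  linarith

lemma HL_100_eq : HL 100 = (1 - Real.exp (-1)) -
    Real.exp (-0.995) * ∫ x in (0:ℝ)..1, Real.exp (-50 * (x - 0.99) ^ 2) := by
  have hA : IntervalIntegrable (fun x : ℝ => Real.exp (-x)) volume 0 1 :=
    (by fun_prop : Continuous fun x : ℝ => Real.exp (-x)).intervalIntegrable _ _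
  have hB : IntervalIntegrable
      (fun x : ℝ => Real.exp (-0.995) * Real.exp (-50 * (x - 0.99) ^ 2)) volume 0 1 :=
    (by fun_prop : Continuous fun x : ℝ =>
      Real.exp (-0.995) * Real.exp (-50 * (x - 0.99) ^ 2)).intervalIntegrable _ _
  have hcongr : HL 100 = ∫ x in (0:ℝ)..1,
      (Real.exp (-x) - Real.exp (-0.995) * Real.exp (-50 * (x - 0.99) ^ 2)) := by
    unfold HL
    apply intervalIntegral.integral_congr
    intro x _
    dsimp only
    rw [mul_sub, mul_one, ← Real.exp_add, ← Real.exp_add]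
    have : -x + -(100 * (1 - x) ^ 2 / 2) = -0.995 + -50 * (x - 0.99) ^ 2 := by ring
    rw [this]
  rw [hcongr, intervalIntegral.integral_sub hA hB, intervalIntegral.integral_const_mul]
  congr 1
  rw [intervalIntegral.integral_comp_neg (fun x : ℝ => Real.exp x)]
  rw [neg_zero, integral_exp, Real.exp_zero]

lemma gauss_bound : (∫ x in (0:ℝ)..1, Real.exp (-50 * (x - 0.99) ^ 2)) ≤
    Real.sqrt (Real.pi / 50) / 2 + 0.01 := by
  have hcont : Continuous fun x : ℝ => Real.exp (-50 * (x - 0.99) ^ 2) := by fun_prop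
  have hsplit : (∫ x in (0:ℝ)..1, Real.exp (-50 * (x - 0.99) ^ 2)) =
      (∫ x in (0:ℝ)..0.99, Real.exp (-50 * (x - 0.99) ^ 2)) +
      ∫ x in (0.99:ℝ)..1, Real.exp (-50 * (x - 0.99) ^ 2) := by
    rw [intervalIntegral.integral_add_adjacent_intervals
      (hcont.intervalIntegrable _ _) (hcont.intervalIntegrable _ _)]
  have h1 : (∫ x in (0:ℝ)..0.99, Real.exp (-50 * (x - 0.99) ^ 2)) ≤
      Real.sqrt (Real.pi / 50) / 2 := by
    have hc : (∫ x in (0:ℝ)..0.99, Real.exp (-50 * (x - 0.99) ^ 2)) =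
        ∫ x in (0:ℝ)..0.99, Real.exp (-50 * x ^ 2) := by
      have := intervalIntegral.integral_comp_sub_left
        (a := (0:ℝ)) (b := 0.99) (fun t : ℝ => Real.exp (-50 * t ^ 2)) 0.99
      rw [show (0.99:ℝ) - 0.99 = 0 by norm_num, show (0.99:ℝ) - 0 = 0.99 by norm_num] at this
      rw [← this]
      apply intervalIntegral.integral_congr
      intro x _
      dsimp only
      have : -50 * (0.99 - x) ^ 2 = -50 * (x - 0.99) ^ 2 := by ring
      rw [this]
    rw [hc]
    rw [intervalIntegral.integral_of_le (by norm_num : (0:ℝ) ≤ 0.99)]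
    rw [← integral_gaussian_Ioi 50]
    apply setIntegral_mono_set
    · exact (integrable_exp_neg_mul_sq (by norm_num : (0:ℝ) < 50)).integrableOn
    · exact Filter.Eventually.of_forall fun x => (Real.exp_pos _).le
    · exact Filter.Eventually.of_forall Set.Ioc_subset_Ioi_self
  have h2 : (∫ x in (0.99:ℝ)..1, Real.exp (-50 * (x - 0.99) ^ 2)) ≤ 0.01 := by
    have : (∫ x in (0.99:ℝ)..1, Real.exp (-50 * (x - 0.99) ^ 2)) ≤
        ∫ _ in (0.99:ℝ)..1, (1:ℝ) := by
      apply intervalIntegral.integral_mono_on (by norm_num)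
        (hcont.intervalIntegrable _ _)
        (intervalIntegrable_const)
      intro x _
      rw [Real.exp_le_one_iff]
      nlinarith [sq_nonneg (x - 0.99)]
    simpa using this.trans (by norm_num)
  linarith

theorem stmt_7 : MonotoneOn HL (Set.Ioi (0:ℝ)) ∧ HL 100 ≥ 0.582 := by
  refine ⟨HL_mono, ?_⟩
  have he1 : Real.exp (-1) ≤ 0.3678794412 := by
    rw [Real.exp_neg]
    have h := Real.exp_one_gt_d9
    rw [show ((0.3678794412 : ℝ)) = (0.3678794412 : ℝ) from rfl]
    have hpos : (0:ℝ) < 2.7182818283 := by norm_num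
    have : (Real.exp 1)⁻¹ ≤ (2.7182818283:ℝ)⁻¹ := by
      apply inv_anti₀ hpos h.le
    refine this.trans ?_
    norm_num
  have he995 : Real.exp (-0.995) ≤ 0.3698 := by
    have heq : Real.exp (-0.995) = Real.exp (-1) * Real.exp (0.005) := by
      rw [← Real.exp_add]; norm_num
    have h005 : Real.exp (0.005) ≤ (0.995:ℝ)⁻¹ := by
      have h := Real.add_one_le_exp (-0.005)
      have h2 : (0.995:ℝ) ≤ Real.exp (-0.005) := by linarith
      have h3 : Real.exp (-0.005) = (Real.exp 0.005)⁻¹ := by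
        rw [← Real.exp_neg]
      rw [h3] at h2
      have hp : (0:ℝ) < Real.exp 0.005 := Real.exp_pos _
      rw [inv_eq_one_div] at h2 ⊢
      rw [le_div_iff₀ hp] at h2
      rw [le_div_iff₀ (by norm_num : (0:ℝ) < 0.995)]
      linarith
    rw [heq]
    have := mul_le_mul he1 h005 (Real.exp_pos _).le (by norm_num)
    refine this.trans ?_
    norm_num
  have hsqrt : Real.sqrt (Real.pi / 50) ≤ 0.2506631 := by
    rw [Real.sqrt_le_iff]
    constructor
    · norm_num
    · nlinarith [Real.pi_lt_d6]
  have hInn : (0:ℝ) ≤ ∫ x in (0:ℝ)..1, Real.exp (-50 * (x - 0.99) ^ 2) :=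
    intervalIntegral.integral_nonneg (by norm_num) fun x _ => (Real.exp_pos _).le
  have hIub : (∫ x in (0:ℝ)..1, Real.exp (-50 * (x - 0.99) ^ 2)) ≤ 0.13533155 := by
    refine gauss_bound.trans ?_
    linarith
  rw [ge_iff_le, HL_100_eq]
  nlinarith [mul_le_mul he995 hIub hInn (by norm_num : (0:ℝ) ≤ 0.3698),
    (Real.exp_pos (-0.995)).le]
end

section
/- For every integer b ≥ 3, Σ_{ℓ=2}^{b−1} (e^{−b} b^ℓ/ℓ!) · exp(−1 + (1 − 1/b)^ℓ) ≤ 1/4 + e^{−2+1/b}/4 + e^{−2+1/b}/√(2π(b−2)). -/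
lemma aux_fact : ∀ (d m : ℕ), Nat.factorial (m + d + 1 + d) ≤ (m + d + 1) ^ (2 * d + 1) * Nat.factorial m := by
  intro d
  induction d with
  | zero => intro m; simp [Nat.factorial_succ]
  | succ d ih =>
    intro m
    have h1 : m + (d + 1) + 1 + (d + 1) = ((m + 1) + d + 1 + d) + 1 := by omega
    rw [h1, Nat.factorial_succ]
    have h2 := ih (m + 1)
    have h3 : (m + 1) + d + 1 + d + 1 = m + 2 * d + 3 := by omega
    calc (((m+1) + d + 1 + d) + 1) * Nat.factorial ((m+1) + d + 1 + d)
        ≤ (m + 2*d + 3) * ((m + d + 2) ^ (2*d+1) * Nat.factorial (m+1)) := by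
          rw [h3]; have h4 : m + 1 + d + 1 = m + d + 2 := by omega
          rw [h4] at h2; have h5 : m + 1 + d + 1 + d = m + d + 2 + d := by omega
          rw [h5]
          exact Nat.mul_le_mul_left _ h2
      _ = ((m + 2*d + 3) * (m + 1)) * ((m + d + 2) ^ (2*d+1) * Nat.factorial m) := by
          rw [Nat.factorial_succ]; ring
      _ ≤ ((m + d + 2) ^ 2) * ((m + d + 2) ^ (2*d+1) * Nat.factorial m) := by
          apply Nat.mul_le_mul_right
          nlinarith
      _ = (m + (d+1) + 1) ^ (2 * (d+1) + 1) * Nat.factorial m := by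
          rw [← mul_assoc, ← pow_add]
          congr 2 <;> omega

lemma median_sum (m : ℕ) (μ : ℝ) (hm : (m : ℝ) ≤ μ) :
    ∑ ℓ ∈ Finset.range m, μ ^ ℓ / (Nat.factorial ℓ : ℝ) ≤ Real.exp μ / 2 := by
  rcases Nat.eq_zero_or_pos m with hm0 | hm0
  · subst hm0; simp; positivity
  have hμ0 : (0:ℝ) ≤ μ := le_trans (by exact_mod_cast Nat.zero_le m) hm
  set T := ∑ ℓ ∈ Finset.range m, μ ^ ℓ / (Nat.factorial ℓ : ℝ) with hT
  have hTU : T ≤ ∑ i ∈ Finset.range m, μ ^ (m + i) / (Nat.factorial (m + i) : ℝ) := by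
    rw [hT, ← Finset.sum_range_reflect (fun i => μ ^ (m + i) / (Nat.factorial (m + i) : ℝ)) m]
    apply Finset.sum_le_sum
    intro i hi
    simp only [Finset.mem_range] at hi
    obtain ⟨d, hd1, hd2⟩ : ∃ d, m - 1 - i = d ∧ m = i + d + 1 := ⟨m - 1 - i, rfl, by omega⟩
    rw [hd1]
    have hidx : m + d = i + (2 * d + 1) := by omega
    have hfac : ((Nat.factorial (m + d) : ℝ)) ≤ μ ^ (2 * d + 1) * (Nat.factorial i : ℝ) := by
      have h1 := aux_fact d i
      have h2 : ((Nat.factorial (i + d + 1 + d) : ℕ) : ℝ) ≤ ((i + d + 1 : ℕ) : ℝ) ^ (2 * d + 1) * (Nat.factorial i : ℝ) := by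
        exact_mod_cast h1
      have h3 : ((i + d + 1 : ℕ) : ℝ) = (m : ℝ) := by exact_mod_cast congrArg (Nat.cast : ℕ → ℝ) hd2.symm
      have h4 : i + d + 1 + d = m + d := by omega
      rw [h4, h3] at h2
      calc ((Nat.factorial (m + d) : ℝ)) ≤ (m : ℝ) ^ (2 * d + 1) * (Nat.factorial i : ℝ) := h2
        _ ≤ μ ^ (2 * d + 1) * (Nat.factorial i : ℝ) := by
            apply mul_le_mul_of_nonneg_right _ (by positivity)
            exact pow_le_pow_left₀ (by positivity) hm _
    rw [div_le_div_iff₀ (by positivity) (by positivity)]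
    calc μ ^ i * (Nat.factorial (m + d) : ℝ) ≤ μ ^ i * (μ ^ (2 * d + 1) * (Nat.factorial i : ℝ)) :=
          mul_le_mul_of_nonneg_left hfac (by positivity)
      _ = μ ^ (m + d) * (Nat.factorial i : ℝ) := by rw [hidx, pow_add]; ring
  have hsplit : T + ∑ i ∈ Finset.range m, μ ^ (m + i) / (Nat.factorial (m + i) : ℝ)
      = ∑ ℓ ∈ Finset.range (2 * m), μ ^ ℓ / (Nat.factorial ℓ : ℝ) := by
    have h1 : ∑ i ∈ Finset.range m, μ ^ (m + i) / (Nat.factorial (m + i) : ℝ)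
        = ∑ ℓ ∈ Finset.Ico m (2 * m), μ ^ ℓ / (Nat.factorial ℓ : ℝ) := by
      rw [Finset.sum_Ico_eq_sum_range]
      have h2 : 2 * m - m = m := by omega
      rw [h2]
    rw [h1, hT, Finset.range_eq_Ico, Finset.range_eq_Ico]
    exact Finset.sum_Ico_consecutive (fun ℓ => μ ^ ℓ / (Nat.factorial ℓ : ℝ)) (Nat.zero_le m) (by omega : m ≤ 2 * m)
  have hfull : ∑ ℓ ∈ Finset.range (2 * m), μ ^ ℓ / (Nat.factorial ℓ : ℝ) ≤ Real.exp μ :=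
    Real.sum_le_exp_of_nonneg hμ0 _
  linarith

lemma exp_quad {t : ℝ} (ht : 0 ≤ t) : Real.exp (-t) ≤ 1 - t + t ^ 2 / 2 := by
  have key : ∀ x : ℝ, HasDerivAt (fun s : ℝ => (1 - s + s ^ 2 / 2) - Real.exp (-s))
      (-1 + x + Real.exp (-x)) x := by
    intro x
    have h1 : HasDerivAt (fun s : ℝ => 1 - s + s ^ 2 / 2) (-1 + x) x := by
      have := (((hasDerivAt_id x).const_sub 1).add ((hasDerivAt_pow 2 x).div_const 2))
      refine this.congr_deriv ?_
      norm_num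
    have h2 : HasDerivAt (fun s : ℝ => Real.exp (-s)) (-Real.exp (-x)) x := by
      have := (Real.hasDerivAt_exp (-x)).comp x ((hasDerivAt_id x).neg)
      refine this.congr_deriv ?_
      ring
    refine (h1.sub h2).congr_deriv ?_
    ring
  have hmono : MonotoneOn (fun s : ℝ => (1 - s + s ^ 2 / 2) - Real.exp (-s)) (Set.Ici (0:ℝ)) := by
    apply monotoneOn_of_deriv_nonneg (convex_Ici 0)
    · exact Continuous.continuousOn (by continuity)
    · intro x hx
      exact ((key x).differentiableAt).differentiableWithinAt
    · intro x hx
      rw [interior_Ici] at hx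
      rw [(key x).deriv]
      nlinarith [Real.add_one_le_exp (-x)]
  have h0 := hmono (Set.mem_Ici.2 le_rfl) (Set.mem_Ici.2 ht) ht
  simp [Real.exp_zero] at h0
  linarith

lemma stirling_lower (k : ℕ) (hk : 1 ≤ k) :
    Real.sqrt (2 * Real.pi * k) * ((k : ℝ) / Real.exp 1) ^ k ≤ (Nat.factorial k : ℝ) := by
  have h1 : Real.sqrt Real.pi ≤ Stirling.stirlingSeq k := by
    obtain ⟨n, rfl⟩ : ∃ n, k = n + 1 := ⟨k - 1, by omega⟩
    refine Stirling.stirlingSeq'_antitone.le_of_tendsto ?_ n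
    exact Stirling.tendsto_stirlingSeq_sqrt_pi.comp (Filter.tendsto_add_atTop_nat 1)
  have hk0 : (0:ℝ) < k := by exact_mod_cast hk
  have hD : (0:ℝ) < Real.sqrt (2 * k) * ((k : ℝ) / Real.exp 1) ^ k := by positivity
  rw [Stirling.stirlingSeq, le_div_iff₀ hD] at h1
  calc Real.sqrt (2 * Real.pi * k) * ((k : ℝ) / Real.exp 1) ^ k
      = Real.sqrt Real.pi * (Real.sqrt (2 * k) * ((k : ℝ) / Real.exp 1) ^ k) := by
        rw [← mul_assoc, ← Real.sqrt_mul Real.pi_pos.le]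
        ring_nf
    _ ≤ (Nat.factorial (k) : ℝ) := h1

lemma mode_bound (k : ℕ) (hk : 1 ≤ k) (μ : ℝ) (hμ : 0 ≤ μ) :
    Real.exp (-μ) * μ ^ k / (Nat.factorial k : ℝ) ≤ 1 / Real.sqrt (2 * Real.pi * k) := by
  have hk0 : (0:ℝ) < k := by exact_mod_cast hk
  have hsq : (0:ℝ) < Real.sqrt (2 * Real.pi * k) := by
    apply Real.sqrt_pos.2; positivity
  have h1 : Real.exp (-μ) * μ ^ k ≤ ((k : ℝ) / Real.exp 1) ^ k := by
    have h2 : μ / k ≤ Real.exp (μ / k - 1) := by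
      have := Real.add_one_le_exp (μ / k - 1); linarith
    have h3 : (μ / k) ^ k ≤ Real.exp (μ / k - 1) ^ k :=
      pow_le_pow_left₀ (by positivity) h2 k
    rw [← Real.exp_nat_mul] at h3
    have h4 : (k : ℝ) * (μ / k - 1) = μ - k := by field_simp
    rw [h4] at h3
    have h5 : μ ^ k ≤ (k:ℝ) ^ k * Real.exp (μ - (k:ℝ)) := by
      have := mul_le_mul_of_nonneg_left h3 (le_of_lt (pow_pos hk0 k))
      rw [div_pow] at this
      calc μ ^ k = (k:ℝ) ^ k * (μ ^ k / (k:ℝ) ^ k) := by field_simp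
        _ ≤ (k:ℝ) ^ k * Real.exp (μ - (k:ℝ)) := this
    calc Real.exp (-μ) * μ ^ k ≤ Real.exp (-μ) * ((k:ℝ) ^ k * Real.exp (μ - (k:ℝ))) :=
          mul_le_mul_of_nonneg_left h5 (Real.exp_pos _).le
      _ = (k:ℝ) ^ k * Real.exp (-(k:ℝ)) := by
          rw [← mul_assoc, mul_comm (Real.exp (-μ)), mul_assoc, ← Real.exp_add]
          ring_nf
      _ = ((k : ℝ) / Real.exp 1) ^ k := by
          rw [div_pow, ← Real.exp_nat_mul]
          rw [Real.exp_neg]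
          field_simp
  rw [div_le_div_iff₀ (by positivity) hsq]
  calc Real.exp (-μ) * μ ^ k * Real.sqrt (2 * Real.pi * k)
      ≤ ((k : ℝ) / Real.exp 1) ^ k * Real.sqrt (2 * Real.pi * k) :=
        mul_le_mul_of_nonneg_right h1 hsq.le
    _ = Real.sqrt (2 * Real.pi * k) * ((k : ℝ) / Real.exp 1) ^ k := by ring
    _ ≤ (Nat.factorial k : ℝ) := stirling_lower k hk
    _ = 1 * (Nat.factorial k : ℝ) := by ring
theorem stmt_12 (b : ℕ) (hb : 3 ≤ b) :
    ∑ ℓ ∈ Finset.Ico 2 b,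
        Real.exp (-(b : ℝ)) * (b : ℝ) ^ ℓ / (Nat.factorial ℓ : ℝ) *
          Real.exp (-1 + (1 - 1 / (b : ℝ)) ^ ℓ)
      ≤ 1 / 4 + Real.exp (-2 + 1 / (b : ℝ)) / 4 +
          Real.exp (-2 + 1 / (b : ℝ)) / Real.sqrt (2 * Real.pi * ((b : ℝ) - 2)) := by
  have hb0 : (0:ℝ) < b := by positivity
  have hb3 : (3:ℝ) ≤ (b:ℝ) := by exact_mod_cast hb
  set c : ℝ := 1 - 1 / (b:ℝ) with hc
  have hc0 : 0 ≤ c := by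
    rw [hc]
    have : 1 / (b:ℝ) ≤ 1 := by
      rw [div_le_one hb0]; linarith
    linarith
  have hc1 : c ≤ 1 := by
    rw [hc]
    have : 0 ≤ 1 / (b:ℝ) := by positivity
    linarith
  set μ : ℝ := (b:ℝ) * c ^ 2 with hμdef
  have hμ0 : 0 ≤ μ := by positivity
  have hμval : μ = (b:ℝ) - 2 + 1 / (b:ℝ) := by
    rw [hμdef, hc]; field_simp; ring
  -- the exponent identity
  have hexpb : Real.exp (-(b:ℝ)) = Real.exp (-2 + 1/(b:ℝ)) * Real.exp (-μ) := by
    rw [← Real.exp_add]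
    congr 1
    rw [hμval]; ring
  -- termwise bound
  have hterm : ∀ ℓ ∈ Finset.Ico 2 b,
      Real.exp (-(b : ℝ)) * (b : ℝ) ^ ℓ / (Nat.factorial ℓ : ℝ) * Real.exp (-1 + c ^ ℓ)
        ≤ Real.exp (-(b : ℝ)) * (b : ℝ) ^ ℓ / (Nat.factorial ℓ : ℝ) / 2
          + Real.exp (-(b : ℝ)) * μ ^ ℓ / (Nat.factorial ℓ : ℝ) / 2 := by
    intro ℓ _
    have hcl0 : 0 ≤ c ^ ℓ := pow_nonneg hc0 ℓ
    have hcl1 : c ^ ℓ ≤ 1 := pow_le_one₀ hc0 hc1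
    have hq : Real.exp (-1 + c ^ ℓ) ≤ 1/2 + (c ^ 2) ^ ℓ / 2 := by
      have h := exp_quad (t := 1 - c ^ ℓ) (by linarith)
      have heq : -(1 - c ^ ℓ) = -1 + c ^ ℓ := by ring
      rw [heq] at h
      have h2 : (c ^ 2) ^ ℓ = (c ^ ℓ) ^ 2 := by
        rw [← pow_mul, ← pow_mul, mul_comm]
      calc Real.exp (-1 + c ^ ℓ) ≤ 1 - (1 - c ^ ℓ) + (1 - c ^ ℓ) ^ 2 / 2 := h
        _ = 1/2 + (c ^ ℓ) ^ 2 / 2 := by ring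
        _ = 1/2 + (c ^ 2) ^ ℓ / 2 := by rw [h2]
    have hp0 : 0 ≤ Real.exp (-(b : ℝ)) * (b : ℝ) ^ ℓ / (Nat.factorial ℓ : ℝ) := by positivity
    calc Real.exp (-(b : ℝ)) * (b : ℝ) ^ ℓ / (Nat.factorial ℓ : ℝ) * Real.exp (-1 + c ^ ℓ)
        ≤ Real.exp (-(b : ℝ)) * (b : ℝ) ^ ℓ / (Nat.factorial ℓ : ℝ) * (1/2 + (c ^ 2) ^ ℓ / 2) :=
          mul_le_mul_of_nonneg_left hq hp0
      _ = Real.exp (-(b : ℝ)) * (b : ℝ) ^ ℓ / (Nat.factorial ℓ : ℝ) / 2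
          + Real.exp (-(b : ℝ)) * μ ^ ℓ / (Nat.factorial ℓ : ℝ) / 2 := by
          rw [hμdef, mul_pow]
          ring
  have hS := Finset.sum_le_sum hterm
  rw [Finset.sum_add_distrib] at hS
  -- bound 1 : Poisson(b) partial mass
  have hB1 : ∑ ℓ ∈ Finset.Ico 2 b, Real.exp (-(b : ℝ)) * (b : ℝ) ^ ℓ / (Nat.factorial ℓ : ℝ) / 2
      ≤ 1 / 4 := by
    have hsub : ∑ ℓ ∈ Finset.Ico 2 b, Real.exp (-(b : ℝ)) * (b : ℝ) ^ ℓ / (Nat.factorial ℓ : ℝ)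
        ≤ ∑ ℓ ∈ Finset.range b, Real.exp (-(b : ℝ)) * (b : ℝ) ^ ℓ / (Nat.factorial ℓ : ℝ) := by
      apply Finset.sum_le_sum_of_subset_of_nonneg
      · rw [Finset.range_eq_Ico]
        exact Finset.Ico_subset_Ico (by omega) le_rfl
      · intro i _ _; positivity
    have hmain : ∑ ℓ ∈ Finset.range b, Real.exp (-(b : ℝ)) * (b : ℝ) ^ ℓ / (Nat.factorial ℓ : ℝ)
        ≤ 1 / 2 := by
      have h1 : ∑ ℓ ∈ Finset.range b, Real.exp (-(b : ℝ)) * (b : ℝ) ^ ℓ / (Nat.factorial ℓ : ℝ)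
          = Real.exp (-(b : ℝ)) * ∑ ℓ ∈ Finset.range b, (b : ℝ) ^ ℓ / (Nat.factorial ℓ : ℝ) := by
        rw [Finset.mul_sum]
        apply Finset.sum_congr rfl
        intro i _; ring
      rw [h1]
      have h2 := median_sum b (b:ℝ) le_rfl
      calc Real.exp (-(b : ℝ)) * ∑ ℓ ∈ Finset.range b, (b : ℝ) ^ ℓ / (Nat.factorial ℓ : ℝ)
          ≤ Real.exp (-(b : ℝ)) * (Real.exp (b:ℝ) / 2) :=
            mul_le_mul_of_nonneg_left h2 (Real.exp_pos _).le
        _ = 1 / 2 := by rw [← mul_div_assoc, ← Real.exp_add]; simp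
    rw [← Finset.sum_div]
    linarith
  -- bound 2 : Poisson(μ) partial mass
  obtain ⟨k, hk1, hkb⟩ : ∃ k, 1 ≤ k ∧ b = k + 2 := ⟨b - 2, by omega, by omega⟩
  have hkR : ((k : ℝ)) = (b : ℝ) - 2 := by rw [hkb]; push_cast; ring
  have hkμ : (k : ℝ) ≤ μ := by
    rw [hμval, hkR]
    have : 0 ≤ 1 / (b:ℝ) := by positivity
    linarith
  have hsqpos : (0:ℝ) < Real.sqrt (2 * Real.pi * k) := by
    apply Real.sqrt_pos.2
    have : (1:ℝ) ≤ (k:ℝ) := by exact_mod_cast hk1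
    nlinarith [Real.pi_pos]
  have hB2 : ∑ ℓ ∈ Finset.Ico 2 b, Real.exp (-(b : ℝ)) * μ ^ ℓ / (Nat.factorial ℓ : ℝ) / 2
      ≤ Real.exp (-2 + 1/(b:ℝ)) / 4 + Real.exp (-2 + 1/(b:ℝ)) / Real.sqrt (2 * Real.pi * k) := by
    have hsub : ∑ ℓ ∈ Finset.Ico 2 b, Real.exp (-(b : ℝ)) * μ ^ ℓ / (Nat.factorial ℓ : ℝ)
        ≤ ∑ ℓ ∈ Finset.range b, Real.exp (-(b : ℝ)) * μ ^ ℓ / (Nat.factorial ℓ : ℝ) := by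
      apply Finset.sum_le_sum_of_subset_of_nonneg
      · rw [Finset.range_eq_Ico]
        exact Finset.Ico_subset_Ico (by omega) le_rfl
      · intro i _ _; positivity
    have hsplit : ∑ ℓ ∈ Finset.range b, Real.exp (-(b : ℝ)) * μ ^ ℓ / (Nat.factorial ℓ : ℝ)
        = (∑ ℓ ∈ Finset.range k, Real.exp (-(b : ℝ)) * μ ^ ℓ / (Nat.factorial ℓ : ℝ))
          + Real.exp (-(b : ℝ)) * μ ^ k / (Nat.factorial k : ℝ)
          + Real.exp (-(b : ℝ)) * μ ^ (k+1) / (Nat.factorial (k+1) : ℝ) := by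
      rw [hkb]
      rw [show k + 2 = (k + 1) + 1 by omega, Finset.sum_range_succ, Finset.sum_range_succ]
    -- head
    have hhead : ∑ ℓ ∈ Finset.range k, Real.exp (-(b : ℝ)) * μ ^ ℓ / (Nat.factorial ℓ : ℝ)
        ≤ Real.exp (-2 + 1/(b:ℝ)) / 2 := by
      have h1 : ∑ ℓ ∈ Finset.range k, Real.exp (-(b : ℝ)) * μ ^ ℓ / (Nat.factorial ℓ : ℝ)
          = Real.exp (-(b : ℝ)) * ∑ ℓ ∈ Finset.range k, μ ^ ℓ / (Nat.factorial ℓ : ℝ) := by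
        rw [Finset.mul_sum]
        apply Finset.sum_congr rfl
        intro i _; ring
      rw [h1]
      have h2 := median_sum k μ hkμ
      calc Real.exp (-(b : ℝ)) * ∑ ℓ ∈ Finset.range k, μ ^ ℓ / (Nat.factorial ℓ : ℝ)
          ≤ Real.exp (-(b : ℝ)) * (Real.exp μ / 2) :=
            mul_le_mul_of_nonneg_left h2 (Real.exp_pos _).le
        _ = Real.exp (-2 + 1/(b:ℝ)) / 2 := by
            rw [hexpb]
            rw [mul_assoc, ← mul_div_assoc (Real.exp (-μ)), ← Real.exp_add]
            simp
            ring
    -- the two mode terms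
    have hmode1 : Real.exp (-(b : ℝ)) * μ ^ k / (Nat.factorial k : ℝ)
        ≤ Real.exp (-2 + 1/(b:ℝ)) / Real.sqrt (2 * Real.pi * k) := by
      rw [hexpb]
      have h1 := mode_bound k hk1 μ hμ0
      calc Real.exp (-2 + 1/(b:ℝ)) * Real.exp (-μ) * μ ^ k / (Nat.factorial k : ℝ)
          = Real.exp (-2 + 1/(b:ℝ)) * (Real.exp (-μ) * μ ^ k / (Nat.factorial k : ℝ)) := by ring
        _ ≤ Real.exp (-2 + 1/(b:ℝ)) * (1 / Real.sqrt (2 * Real.pi * k)) :=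
            mul_le_mul_of_nonneg_left h1 (Real.exp_pos _).le
        _ = Real.exp (-2 + 1/(b:ℝ)) / Real.sqrt (2 * Real.pi * k) := by ring
    have hmode2 : Real.exp (-(b : ℝ)) * μ ^ (k+1) / (Nat.factorial (k+1) : ℝ)
        ≤ Real.exp (-2 + 1/(b:ℝ)) / Real.sqrt (2 * Real.pi * k) := by
      rw [hexpb]
      have h1 := mode_bound (k+1) (by omega) μ hμ0
      have hmono : 1 / Real.sqrt (2 * Real.pi * ((k:ℕ)+1 : ℕ)) ≤ 1 / Real.sqrt (2 * Real.pi * k) := by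
        apply div_le_div_of_nonneg_left (by norm_num) hsqpos
        apply Real.sqrt_le_sqrt
        have : ((k:ℝ)) ≤ (((k+1 : ℕ)):ℝ) := by push_cast; linarith
        nlinarith [Real.pi_pos]
      calc Real.exp (-2 + 1/(b:ℝ)) * Real.exp (-μ) * μ ^ (k+1) / (Nat.factorial (k+1) : ℝ)
          = Real.exp (-2 + 1/(b:ℝ)) * (Real.exp (-μ) * μ ^ (k+1) / (Nat.factorial (k+1) : ℝ)) := by
            ring
        _ ≤ Real.exp (-2 + 1/(b:ℝ)) * (1 / Real.sqrt (2 * Real.pi * ((k+1 : ℕ) : ℝ))) :=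
            mul_le_mul_of_nonneg_left h1 (Real.exp_pos _).le
        _ ≤ Real.exp (-2 + 1/(b:ℝ)) * (1 / Real.sqrt (2 * Real.pi * k)) := by
            apply mul_le_mul_of_nonneg_left _ (Real.exp_pos _).le
            exact_mod_cast hmono
        _ = Real.exp (-2 + 1/(b:ℝ)) / Real.sqrt (2 * Real.pi * k) := by ring
    rw [← Finset.sum_div]
    have := hsub
    rw [hsplit] at this
    have hE : (0:ℝ) < Real.exp (-2 + 1/(b:ℝ)) := Real.exp_pos _
    linarith
  calc ∑ ℓ ∈ Finset.Ico 2 b,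
        Real.exp (-(b : ℝ)) * (b : ℝ) ^ ℓ / (Nat.factorial ℓ : ℝ) * Real.exp (-1 + c ^ ℓ)
      ≤ (∑ ℓ ∈ Finset.Ico 2 b, Real.exp (-(b : ℝ)) * (b : ℝ) ^ ℓ / (Nat.factorial ℓ : ℝ) / 2)
        + ∑ ℓ ∈ Finset.Ico 2 b, Real.exp (-(b : ℝ)) * μ ^ ℓ / (Nat.factorial ℓ : ℝ) / 2 := hS
    _ ≤ 1 / 4 + (Real.exp (-2 + 1/(b:ℝ)) / 4
        + Real.exp (-2 + 1/(b:ℝ)) / Real.sqrt (2 * Real.pi * (k:ℝ))) := add_le_add hB1 hB2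
    _ = 1 / 4 + Real.exp (-2 + 1 / (b : ℝ)) / 4 +
        Real.exp (-2 + 1 / (b : ℝ)) / Real.sqrt (2 * Real.pi * ((b : ℝ) - 2)) := by
        rw [hkR]; ring
end

section
/- Let J be a finite set, let g : 2^J → ℝ be a monotone submodular set function, let x : J → [0,1] with Σ_{j∈J} x_j = 1, and let ℓ ≥ 1 be an integer. Let U = {J_1, …, J_ℓ} where J_1, …, J_ℓ are i.i.d. random elements of J with Pr[J_ι = j] = x_j, and let V = σ^{(1)} ∪ ⋯ ∪ σ^{(ℓ)} where σ^{(1)}, …, σ^{(ℓ)} are i.i.d. random subsets of J, each including every j ∈ J independently with probability x_j. Then E[g(U)] ≥ E[g(V)]. -/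
set_option linter.unusedSectionVars false

section aux
variable {J : Type*} [Fintype J] [DecidableEq J]

private lemma myTotal (x : J → ℝ) :
    ∑ A : Finset J, (∏ j ∈ A, x j) * ∏ j ∈ Aᶜ, (1 - x j) = 1 := by
  have h := Finset.prod_add x (fun j => 1 - x j) (Finset.univ : Finset J)
  simp only [add_sub_cancel, Finset.prod_const_one, Finset.powerset_univ] at h
  simp only [Finset.compl_eq_univ_sdiff]
  exact h.symm

private lemma myMarg (x : J → ℝ) (j : J) :
    ∑ A : Finset J, (if j ∈ A then (∏ i ∈ A, x i) * ∏ i ∈ Aᶜ, (1 - x i) else 0) = x j := by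
  have hins : insert j (Finset.univ.erase j) = (Finset.univ : Finset J) :=
    Finset.insert_erase (Finset.mem_univ j)
  have hj : j ∉ Finset.univ.erase j := Finset.notMem_erase j _
  have h0 := Finset.sum_powerset_insert hj
    (f := fun A : Finset J => if j ∈ A then (∏ i ∈ A, x i) * ∏ i ∈ Aᶜ, (1 - x i) else 0)
  rw [hins, Finset.powerset_univ] at h0
  rw [h0]
  have h1 : ∑ A ∈ (Finset.univ.erase j).powerset,
      (if j ∈ A then (∏ i ∈ A, x i) * ∏ i ∈ Aᶜ, (1 - x i) else 0) = 0 := by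
    apply Finset.sum_eq_zero
    intro A hA
    rw [Finset.mem_powerset] at hA
    have : j ∉ A := fun h => hj (hA h)
    simp [this]
  rw [h1, zero_add]
  have h2 : ∀ A ∈ (Finset.univ.erase j).powerset,
      (if j ∈ insert j A then (∏ i ∈ insert j A, x i) * ∏ i ∈ (insert j A)ᶜ, (1 - x i) else 0)
        = x j * ((∏ i ∈ A, x i) * ∏ i ∈ Finset.univ.erase j \ A, (1 - x i)) := by
    intro A hA
    rw [Finset.mem_powerset] at hA
    have hjA : j ∉ A := fun h => hj (hA h)
    rw [if_pos (Finset.mem_insert_self j A), Finset.prod_insert hjA]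
    have : (insert j A)ᶜ = Finset.univ.erase j \ A := by
      ext i
      simp only [Finset.mem_compl, Finset.mem_insert, Finset.mem_sdiff, Finset.mem_erase,
        Finset.mem_univ, and_true, true_and]
      tauto
    rw [this]
    ring
  rw [Finset.sum_congr rfl h2, ← Finset.mul_sum, ← Finset.prod_add x (fun i => 1 - x i)]
  simp

private lemma mySubadd (g : Finset J → ℝ)
    (hsub : ∀ S T : Finset J, g (S ∪ T) + g (S ∩ T) ≤ g S + g T)
    (B A : Finset J) :
    g (B ∪ A) ≤ g B + ∑ j ∈ A, (g (B ∪ {j}) - g B) := by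
  induction A using Finset.induction_on with
  | empty => simp
  | @insert a A' ha ih =>
    have h1 := hsub (B ∪ A') (B ∪ {a})
    have e1 : (B ∪ A') ∪ (B ∪ {a}) = B ∪ insert a A' := by
      ext i
      simp only [Finset.mem_union, Finset.mem_insert, Finset.mem_singleton]
      tauto
    have e2 : (B ∪ A') ∩ (B ∪ {a}) = B := by
      ext i
      have hne : i ∈ A' → i ≠ a := fun h he => ha (he ▸ h)
      simp only [Finset.mem_inter, Finset.mem_union, Finset.mem_singleton]
      constructor
      · rintro ⟨hb | hA, hb' | he⟩
        · exact hb
        · exact hb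
        · exact hb'
        · exact absurd he (hne hA)
      · intro h; exact ⟨Or.inl h, Or.inl h⟩
    rw [e1, e2] at h1
    rw [Finset.sum_insert ha]
    linarith

private lemma myKey (g : Finset J → ℝ)
    (hsub : ∀ S T : Finset J, g (S ∪ T) + g (S ∩ T) ≤ g S + g T)
    (x : J → ℝ) (hx : ∀ j, 0 ≤ x j ∧ x j ≤ 1) (hsum : ∑ j, x j = 1) (B : Finset J) :
    ∑ A : Finset J, ((∏ j ∈ A, x j) * ∏ j ∈ Aᶜ, (1 - x j)) * g (B ∪ A)
      ≤ ∑ j, x j * g (B ∪ {j}) := by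
  set p : Finset J → ℝ := fun A => (∏ j ∈ A, x j) * ∏ j ∈ Aᶜ, (1 - x j) with hp
  have hpnn : ∀ A : Finset J, 0 ≤ p A := by
    intro A
    apply mul_nonneg
    · exact Finset.prod_nonneg fun i _ => (hx i).1
    · exact Finset.prod_nonneg fun i _ => by linarith [(hx i).2]
  have step1 : ∑ A : Finset J, p A * g (B ∪ A)
      ≤ ∑ A : Finset J, p A * (g B + ∑ j ∈ A, (g (B ∪ {j}) - g B)) := by
    apply Finset.sum_le_sum
    intro A _
    exact mul_le_mul_of_nonneg_left (mySubadd g hsub B A) (hpnn A)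
  refine le_trans step1 (le_of_eq ?_)
  have expand : ∀ A : Finset J, p A * (g B + ∑ j ∈ A, (g (B ∪ {j}) - g B))
      = p A * g B + ∑ j : J, (if j ∈ A then p A else 0) * (g (B ∪ {j}) - g B) := by
    intro A
    rw [mul_add]
    congr 1
    rw [Finset.mul_sum]
    symm
    simp only [ite_mul, zero_mul]
    rw [Finset.sum_ite_mem, Finset.univ_inter]
  rw [Finset.sum_congr rfl fun A _ => expand A, Finset.sum_add_distrib,
    ← Finset.sum_mul, myTotal x, one_mul, Finset.sum_comm]
  have e3 : ∀ j : J, ∑ A : Finset J, (if j ∈ A then p A else 0) * (g (B ∪ {j}) - g B)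
      = x j * (g (B ∪ {j}) - g B) := by
    intro j
    rw [← Finset.sum_mul, myMarg x j]
  rw [Finset.sum_congr rfl fun j _ => e3 j]
  simp only [mul_sub, Finset.sum_sub_distrib, ← Finset.sum_mul, hsum, one_mul]
  ring

private lemma image_cons {n : ℕ} (a : J) (t : Fin n → J) :
    Finset.univ.image (Fin.cons a t : Fin (n + 1) → J)
      = insert a (Finset.univ.image t) := by
  ext i
  simp [Fin.exists_fin_succ, eq_comm]

private lemma biUnion_cons {n : ℕ} (A0 : Finset J) (A : Fin n → Finset J) :
    Finset.univ.biUnion (Fin.cons A0 A : Fin (n + 1) → Finset J)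
      = A0 ∪ Finset.univ.biUnion A := by
  ext i
  simp [Fin.exists_fin_succ]

private lemma myMain (g : Finset J → ℝ)
    (hsub : ∀ S T : Finset J, g (S ∪ T) + g (S ∩ T) ≤ g S + g T)
    (x : J → ℝ) (hx : ∀ j, 0 ≤ x j ∧ x j ≤ 1) (hsum : ∑ j, x j = 1) :
    ∀ (ℓ : ℕ) (B : Finset J),
    ∑ A : Fin ℓ → Finset J,
        (∏ ι, ((∏ j ∈ A ι, x j) * ∏ j ∈ (A ι)ᶜ, (1 - x j))) * g (B ∪ Finset.univ.biUnion A)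
      ≤ ∑ t : Fin ℓ → J, (∏ ι, x (t ι)) * g (B ∪ Finset.univ.image t) := by
  have hpnn : ∀ A : Finset J, 0 ≤ (∏ j ∈ A, x j) * ∏ j ∈ Aᶜ, (1 - x j) := by
    intro A
    apply mul_nonneg
    · exact Finset.prod_nonneg fun i _ => (hx i).1
    · exact Finset.prod_nonneg fun i _ => by linarith [(hx i).2]
  have hxnn : ∀ {n : ℕ} (t : Fin n → J), (0:ℝ) ≤ ∏ ι, x (t ι) :=
    fun t => Finset.prod_nonneg fun i _ => (hx (t i)).1
  intro ℓ
  induction ℓ with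
  | zero => intro B; simp
  | succ n ih =>
    intro B
    calc ∑ A : Fin (n+1) → Finset J,
          (∏ ι, ((∏ j ∈ A ι, x j) * ∏ j ∈ (A ι)ᶜ, (1 - x j))) * g (B ∪ Finset.univ.biUnion A)
        = ∑ A0 : Finset J, ((∏ j ∈ A0, x j) * ∏ j ∈ A0ᶜ, (1 - x j)) *
            ∑ A : Fin n → Finset J,
              (∏ ι, ((∏ j ∈ A ι, x j) * ∏ j ∈ (A ι)ᶜ, (1 - x j)))
                * g ((B ∪ A0) ∪ Finset.univ.biUnion A) := by
          rw [← Fintype.sum_equiv (Fin.consEquiv fun _ : Fin (n+1) => Finset J)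
            (fun q : Finset J × (Fin n → Finset J) =>
              (∏ ι, ((∏ j ∈ (Fin.cons q.1 q.2 : Fin (n+1) → Finset J) ι, x j)
                * ∏ j ∈ ((Fin.cons q.1 q.2 : Fin (n+1) → Finset J) ι)ᶜ, (1 - x j)))
                * g (B ∪ Finset.univ.biUnion (Fin.cons q.1 q.2)))
            (fun A => (∏ ι, ((∏ j ∈ A ι, x j) * ∏ j ∈ (A ι)ᶜ, (1 - x j)))
                * g (B ∪ Finset.univ.biUnion A)) (fun q => rfl),
            Fintype.sum_prod_type]
          apply Finset.sum_congr rfl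
          intro A0 _
          rw [Finset.mul_sum]
          apply Finset.sum_congr rfl
          intro A _
          rw [biUnion_cons, Fin.prod_univ_succ]
          simp only [Fin.cons_zero, Fin.cons_succ]
          rw [Finset.union_assoc]
          ring
      _ ≤ ∑ A0 : Finset J, ((∏ j ∈ A0, x j) * ∏ j ∈ A0ᶜ, (1 - x j)) *
            ∑ t : Fin n → J, (∏ ι, x (t ι)) * g ((B ∪ A0) ∪ Finset.univ.image t) := by
          apply Finset.sum_le_sum
          intro A0 _
          exact mul_le_mul_of_nonneg_left (ih (B ∪ A0)) (hpnn A0)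
      _ = ∑ t : Fin n → J, (∏ ι, x (t ι)) *
            ∑ A0 : Finset J, ((∏ j ∈ A0, x j) * ∏ j ∈ A0ᶜ, (1 - x j)) *
              g ((B ∪ Finset.univ.image t) ∪ A0) := by
          simp only [Finset.mul_sum]
          rw [Finset.sum_comm]
          apply Finset.sum_congr rfl; intro t _
          apply Finset.sum_congr rfl; intro A0 _
          rw [Finset.union_right_comm]
          ring
      _ ≤ ∑ t : Fin n → J, (∏ ι, x (t ι)) *
            ∑ j, x j * g ((B ∪ Finset.univ.image t) ∪ {j}) := by
          apply Finset.sum_le_sum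
          intro t _
          exact mul_le_mul_of_nonneg_left
            (myKey g hsub x hx hsum (B ∪ Finset.univ.image t)) (hxnn t)
      _ = ∑ t : Fin (n+1) → J, (∏ ι, x (t ι)) * g (B ∪ Finset.univ.image t) := by
          rw [← Fintype.sum_equiv (Fin.consEquiv fun _ : Fin (n+1) => J)
            (fun q : J × (Fin n → J) =>
              (∏ ι, x ((Fin.cons q.1 q.2 : Fin (n+1) → J) ι))
                * g (B ∪ Finset.univ.image (Fin.cons q.1 q.2)))
            (fun t => (∏ ι, x (t ι)) * g (B ∪ Finset.univ.image t)) (fun q => rfl),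
            Fintype.sum_prod_type]
          rw [Finset.sum_comm]
          apply Finset.sum_congr rfl; intro t _
          rw [Finset.mul_sum]
          apply Finset.sum_congr rfl; intro j _
          rw [image_cons, Fin.prod_univ_succ]
          simp only [Fin.cons_zero, Fin.cons_succ]
          have : (B ∪ Finset.univ.image t) ∪ {j} = B ∪ insert j (Finset.univ.image t) := by
            ext i
            simp only [Finset.mem_union, Finset.mem_insert, Finset.mem_singleton]
            tauto
          rw [this]
          ring

end aux


theorem stmt_13 {J : Type*} [Fintype J] [DecidableEq J]
    (g : Finset J → ℝ)
    (hmono : ∀ S T : Finset J, S ⊆ T → g S ≤ g T)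
    (hsub : ∀ S T : Finset J, g (S ∪ T) + g (S ∩ T) ≤ g S + g T)
    (x : J → ℝ) (hx : ∀ j, 0 ≤ x j ∧ x j ≤ 1) (hsum : ∑ j, x j = 1)
    (ℓ : ℕ) (hℓ : 1 ≤ ℓ) :
    -- E[g(U)] where U = {J_1,…,J_ℓ}, J_ι i.i.d. with Pr[J_ι = j] = x_j
    ∑ t : Fin ℓ → J, (∏ ι, x (t ι)) * g (Finset.univ.image t)
      ≥
    -- E[g(V)] where V = σ⁽¹⁾ ∪ ⋯ ∪ σ⁽ℓ⁾, σ⁽ι⁾ i.i.d. independent samples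
    ∑ A : Fin ℓ → Finset J,
        (∏ ι, ((∏ j ∈ A ι, x j) * ∏ j ∈ (A ι)ᶜ, (1 - x j))) * g (Finset.univ.biUnion A) := by
  have h := myMain g hsub x hx hsum ℓ ∅
  simpa using h
end

section
/- Let J be a finite set, let g : 2^J → ℝ be a nonnegative monotone submodular set function, let x ∈ [0,1]^J, and let c ∈ [0,1]. Then G(c·x) ≥ (1 − e^{−c}) · g⁺(x), where G is the multilinear extension of g and g⁺ is its concave closure. -/
/-- The concave closure `g⁺` of a set function `g` on a finite ground set. -/
noncomputable def concaveClosure {J : Type*} [Fintype J] [DecidableEq J]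
    (g : Finset J → ℝ) (y : J → ℝ) : ℝ :=
  sSup { v : ℝ | ∃ α : Finset J → ℝ, (∀ S, 0 ≤ α S) ∧ (∑ S : Finset J, α S = 1) ∧
    (∀ j, ∑ S ∈ Finset.univ.filter (fun S : Finset J => j ∈ S), α S = y j) ∧
    v = ∑ S : Finset J, α S * g S }

/-- The multilinear extension `G` of a set function `g` on a finite ground set. -/
noncomputable def multilinearExt {J : Type*} [Fintype J] [DecidableEq J]
    (g : Finset J → ℝ) (x : J → ℝ) : ℝ :=
  ∑ S : Finset J, g S * (∏ j ∈ S, x j) * ∏ j ∈ Sᶜ, (1 - x j)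

namespace Stmt16Aux

open Finset

variable {J : Type*} [DecidableEq J]

/-- Product (independent Bernoulli) weight of a subset `S` of ground set `u`. -/
noncomputable def wgt (u : Finset J) (y : J → ℝ) (S : Finset J) : ℝ :=
  (∏ j ∈ S, y j) * ∏ j ∈ u \ S, (1 - y j)

lemma wgt_nonneg {y : J → ℝ} (hy : ∀ j, 0 ≤ y j ∧ y j ≤ 1) (u S : Finset J) :
    0 ≤ wgt u y S :=
  mul_nonneg (Finset.prod_nonneg fun j _ => (hy j).1)
    (Finset.prod_nonneg fun j _ => by linarith [(hy j).2])

lemma wgt_sum_one (u : Finset J) (y : J → ℝ) :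
    ∑ S ∈ u.powerset, wgt u y S = 1 := by
  have h := Finset.prod_add (fun j => y j) (fun j => 1 - y j) u
  have h2 : ∀ j ∈ u, y j + (1 - y j) = (1 : ℝ) := fun j _ => by ring
  rw [Finset.prod_congr rfl h2, Finset.prod_const_one] at h
  simpa [wgt] using h.symm

lemma wgt_insert_not_mem {u : Finset J} {i : J} (hiu : i ∉ u) (y : J → ℝ)
    {A : Finset J} (hA : A ⊆ u) :
    wgt (insert i u) y A = (1 - y i) * wgt u y A := by
  have hiA : i ∉ A := fun h => hiu (hA h)
  have h1 : insert i u \ A = insert i (u \ A) := Finset.insert_sdiff_of_notMem u hiA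
  have h2 : i ∉ u \ A := fun h => hiu (Finset.mem_sdiff.1 h).1
  rw [wgt, wgt, h1, Finset.prod_insert h2]; ring

lemma wgt_insert_mem {u : Finset J} {i : J} (hiu : i ∉ u) (y : J → ℝ)
    {A : Finset J} (hA : A ⊆ u) :
    wgt (insert i u) y (insert i A) = y i * wgt u y A := by
  have hiA : i ∉ A := fun h => hiu (hA h)
  have h1 : insert i u \ insert i A = u \ A := by
    rw [Finset.insert_sdiff_insert, Finset.sdiff_insert]
    exact Finset.erase_eq_of_notMem (fun h => hiu (Finset.mem_sdiff.1 h).1)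
  rw [wgt, wgt, Finset.prod_insert hiA, h1]; ring

/-- The key "union of independent random sets" identity. -/
lemma union_identity (q p : J → ℝ) (u : Finset J) :
    ∀ F : Finset J → ℝ,
      ∑ A ∈ u.powerset, ∑ B ∈ u.powerset, wgt u q A * wgt u p B * F (A ∪ B)
        = ∑ T ∈ u.powerset, wgt u (fun j => q j + p j - q j * p j) T * F T := by
  induction u using Finset.induction_on with
  | empty => intro F; simp [wgt]
  | @insert i u hiu ih =>
    intro F
    have hq0 : ∀ A ∈ u.powerset, wgt (insert i u) q A = (1 - q i) * wgt u q A :=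
      fun A hA => wgt_insert_not_mem hiu q (Finset.mem_powerset.1 hA)
    have hq1 : ∀ A ∈ u.powerset, wgt (insert i u) q (insert i A) = q i * wgt u q A :=
      fun A hA => wgt_insert_mem hiu q (Finset.mem_powerset.1 hA)
    have hp0 : ∀ A ∈ u.powerset, wgt (insert i u) p A = (1 - p i) * wgt u p A :=
      fun A hA => wgt_insert_not_mem hiu p (Finset.mem_powerset.1 hA)
    have hp1 : ∀ A ∈ u.powerset, wgt (insert i u) p (insert i A) = p i * wgt u p A :=
      fun A hA => wgt_insert_mem hiu p (Finset.mem_powerset.1 hA)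
    have hr0 : ∀ A ∈ u.powerset, wgt (insert i u) (fun j => q j + p j - q j * p j) A
        = (1 - (q i + p i - q i * p i)) * wgt u (fun j => q j + p j - q j * p j) A :=
      fun A hA => wgt_insert_not_mem hiu _ (Finset.mem_powerset.1 hA)
    have hr1 : ∀ A ∈ u.powerset, wgt (insert i u) (fun j => q j + p j - q j * p j) (insert i A)
        = (q i + p i - q i * p i) * wgt u (fun j => q j + p j - q j * p j) A :=
      fun A hA => wgt_insert_mem hiu _ (Finset.mem_powerset.1 hA)
    rw [Finset.sum_powerset_insert hiu, Finset.sum_powerset_insert hiu]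
    have inner1 : ∀ A ∈ u.powerset,
        ∑ B ∈ (insert i u).powerset, wgt (insert i u) q A * wgt (insert i u) p B * F (A ∪ B)
        = (1 - q i) * (1 - p i) * (∑ B ∈ u.powerset, wgt u q A * wgt u p B * F (A ∪ B))
          + (1 - q i) * p i * (∑ B ∈ u.powerset, wgt u q A * wgt u p B * F (insert i (A ∪ B))) := by
      intro A hA
      rw [Finset.sum_powerset_insert hiu, Finset.mul_sum, Finset.mul_sum]
      congr 1
      · refine Finset.sum_congr rfl fun B hB => ?_
        rw [hq0 A hA, hp0 B hB]; ring
      · refine Finset.sum_congr rfl fun B hB => ?_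
        rw [hq0 A hA, hp1 B hB, Finset.union_insert]; ring
    have inner2 : ∀ A ∈ u.powerset,
        ∑ B ∈ (insert i u).powerset,
            wgt (insert i u) q (insert i A) * wgt (insert i u) p B * F (insert i A ∪ B)
        = q i * (1 - p i) * (∑ B ∈ u.powerset, wgt u q A * wgt u p B * F (insert i (A ∪ B)))
          + q i * p i * (∑ B ∈ u.powerset, wgt u q A * wgt u p B * F (insert i (A ∪ B))) := by
      intro A hA
      rw [Finset.sum_powerset_insert hiu, Finset.mul_sum, Finset.mul_sum]
      congr 1
      · refine Finset.sum_congr rfl fun B hB => ?_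
        rw [hq1 A hA, hp0 B hB, Finset.insert_union]; ring
      · refine Finset.sum_congr rfl fun B hB => ?_
        rw [hq1 A hA, hp1 B hB]
        have : insert i A ∪ insert i B = insert i (A ∪ B) := by
          rw [Finset.insert_union, Finset.union_insert, Finset.insert_idem]
        rw [this]; ring
    have rhs0 : ∑ t ∈ u.powerset, wgt (insert i u) (fun j => q j + p j - q j * p j) t * F t
        = (1 - (q i + p i - q i * p i))
            * ∑ t ∈ u.powerset, wgt u (fun j => q j + p j - q j * p j) t * F t := by
      rw [Finset.mul_sum]
      exact Finset.sum_congr rfl fun t ht => by rw [hr0 t ht]; ring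
    have rhs1 : ∑ t ∈ u.powerset,
          wgt (insert i u) (fun j => q j + p j - q j * p j) (insert i t) * F (insert i t)
        = (q i + p i - q i * p i)
            * ∑ t ∈ u.powerset, wgt u (fun j => q j + p j - q j * p j) t * F (insert i t) := by
      rw [Finset.mul_sum]
      exact Finset.sum_congr rfl fun t ht => by rw [hr1 t ht]; ring
    rw [Finset.sum_congr rfl inner1, Finset.sum_congr rfl inner2,
      Finset.sum_add_distrib, Finset.sum_add_distrib, rhs0, rhs1]
    rw [← Finset.mul_sum, ← Finset.mul_sum, ← Finset.mul_sum, ← Finset.mul_sum,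
      ih F, ih (fun S => F (insert i S))]
    ring

/-- Diminishing returns / submodularity in marginal form. -/
lemma dimret (g : Finset J → ℝ)
    (hmono : ∀ S T : Finset J, S ⊆ T → g S ≤ g T)
    (hsub : ∀ S T : Finset J, g (S ∪ T) + g (S ∩ T) ≤ g S + g T)
    {A B : Finset J} (hAB : A ⊆ B) (j : J) :
    g (insert j B) - g B ≤ g (insert j A) - g A := by
  by_cases hjB : j ∈ B
  · rw [Finset.insert_eq_self.2 hjB]
    have := hmono A (insert j A) (Finset.subset_insert j A)
    linarith
  · have h := hsub (insert j A) B
    have h1 : insert j A ∪ B = insert j B := by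
      rw [Finset.insert_union, Finset.union_eq_right.2 hAB]
    have h2 : insert j A ∩ B = A := by
      ext t
      simp only [Finset.mem_inter, Finset.mem_insert]
      constructor
      · rintro ⟨h3 | h3, h4⟩
        · exact absurd (h3 ▸ h4) hjB
        · exact h3
      · exact fun ht => ⟨Or.inr ht, hAB ht⟩
    rw [h1, h2] at h
    linarith

/-- Telescoping bound for monotone submodular functions. -/
lemma tele (g : Finset J → ℝ)
    (hmono : ∀ S T : Finset J, S ⊆ T → g S ≤ g T)
    (hsub : ∀ S T : Finset J, g (S ∪ T) + g (S ∩ T) ≤ g S + g T)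
    (A : Finset J) (T : Finset J) :
    g (A ∪ T) ≤ g A + ∑ j ∈ T, (g (insert j A) - g A) := by
  induction T using Finset.induction_on with
  | empty => simp
  | @insert j T hj ih =>
    have h1 : A ∪ insert j T = insert j (A ∪ T) := Finset.union_insert j A T
    have h2 := dimret g hmono hsub (Finset.subset_union_left (s₁ := A) (s₂ := T)) j
    rw [h1, Finset.sum_insert hj]
    linarith

section FintypeSide

variable [Fintype J]

/-- The multilinear extension written with `wgt`. -/
noncomputable def mle (g : Finset J → ℝ) (y : J → ℝ) : ℝ :=
  ∑ S ∈ (Finset.univ : Finset J).powerset, wgt Finset.univ y S * g S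

lemma mle_eq (g : Finset J → ℝ) (y : J → ℝ) : multilinearExt g y = mle g y := by
  rw [multilinearExt, mle, Finset.powerset_univ]
  refine Finset.sum_congr rfl fun S _ => ?_
  rw [wgt, Finset.compl_eq_univ_sdiff]; ring

lemma mle_nonneg (g : Finset J → ℝ) (hnn : ∀ S, 0 ≤ g S)
    {y : J → ℝ} (hy : ∀ j, 0 ≤ y j ∧ y j ≤ 1) : 0 ≤ mle g y :=
  Finset.sum_nonneg fun S _ => mul_nonneg (wgt_nonneg hy _ _) (hnn S)

/-- The exchange bound coming from the distribution `α` witnessing the concave closure. -/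
lemma gain (g : Finset J → ℝ)
    (hmono : ∀ S T : Finset J, S ⊆ T → g S ≤ g T)
    (hsub : ∀ S T : Finset J, g (S ∪ T) + g (S ∩ T) ≤ g S + g T)
    (x : J → ℝ) (α : Finset J → ℝ) (hα0 : ∀ S, 0 ≤ α S)
    (hα1 : ∑ S : Finset J, α S = 1)
    (hmarg : ∀ j, ∑ S ∈ Finset.univ.filter (fun S : Finset J => j ∈ S), α S = x j)
    (A : Finset J) :
    (∑ S : Finset J, α S * g S) - g A ≤ ∑ j : J, x j * (g (insert j A) - g A) := by
  have swap : ∑ j : J, x j * (g (insert j A) - g A)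
      = ∑ T : Finset J, α T * ∑ j ∈ T, (g (insert j A) - g A) := by
    calc ∑ j : J, x j * (g (insert j A) - g A)
        = ∑ j : J, ∑ T ∈ Finset.univ.filter (fun T : Finset J => j ∈ T),
            α T * (g (insert j A) - g A) := by
          refine Finset.sum_congr rfl fun j _ => ?_
          rw [← Finset.sum_mul, hmarg j]
      _ = ∑ j : J, ∑ T : Finset J,
            if j ∈ T then α T * (g (insert j A) - g A) else 0 := by
          refine Finset.sum_congr rfl fun j _ => ?_
          rw [Finset.sum_filter]
      _ = ∑ T : Finset J, ∑ j : J,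
            if j ∈ T then α T * (g (insert j A) - g A) else 0 := Finset.sum_comm
      _ = ∑ T : Finset J, α T * ∑ j ∈ T, (g (insert j A) - g A) := by
          refine Finset.sum_congr rfl fun T _ => ?_
          rw [Finset.sum_ite_mem, Finset.univ_inter, Finset.mul_sum]
  have expand : (∑ S : Finset J, α S * g S) - g A = ∑ T : Finset J, α T * (g T - g A) := by
    simp only [mul_sub, Finset.sum_sub_distrib, ← Finset.sum_mul, hα1, one_mul]
  rw [swap, expand]
  refine Finset.sum_le_sum fun T _ => mul_le_mul_of_nonneg_left ?_ (hα0 T)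
  have h1 := tele g hmono hsub A T
  have h2 : g T ≤ g (A ∪ T) := hmono _ _ Finset.subset_union_right
  linarith

/-- One step of the discrete continuous-greedy style recursion. -/
lemma step (g : Finset J → ℝ) (hnn : ∀ S, 0 ≤ g S)
    (hmono : ∀ S T : Finset J, S ⊆ T → g S ≤ g T)
    (hsub : ∀ S T : Finset J, g (S ∪ T) + g (S ∩ T) ≤ g S + g T)
    (x : J → ℝ) (hx : ∀ j, 0 ≤ x j ∧ x j ≤ 1)
    (α : Finset J → ℝ) (hα0 : ∀ S, 0 ≤ α S)
    (hα1 : ∑ S : Finset J, α S = 1)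
    (hmarg : ∀ j, ∑ S ∈ Finset.univ.filter (fun S : Finset J => j ∈ S), α S = x j)
    (δ : ℝ) (hδ0 : 0 ≤ δ) (hδ1 : δ ≤ 1)
    (y : J → ℝ) (hy : ∀ j, 0 ≤ y j ∧ y j ≤ 1) :
    (1 - δ * (1 - δ) ^ (Fintype.card J)) * mle g y
      + δ * (1 - δ) ^ (Fintype.card J) * (∑ S : Finset J, α S * g S)
      ≤ mle g (fun j => y j + δ * x j - y j * (δ * x j)) := by
  classical
  set N := Fintype.card J with hN
  set ε : ℝ := δ * (1 - δ) ^ N with hε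
  set V := ∑ S : Finset J, α S * g S with hV
  clear_value N ε V
  have hδ' : (0:ℝ) ≤ 1 - δ := by linarith
  have hε0 : 0 ≤ ε := by rw [hε]; exact mul_nonneg hδ0 (pow_nonneg hδ' _)
  have hp01 : ∀ j, 0 ≤ δ * x j ∧ δ * x j ≤ 1 := fun j =>
    ⟨mul_nonneg hδ0 (hx j).1, by nlinarith [(hx j).1, (hx j).2]⟩
  have hid : mle g (fun j => y j + δ * x j - y j * (δ * x j))
      = ∑ A ∈ (Finset.univ : Finset J).powerset, ∑ B ∈ (Finset.univ : Finset J).powerset,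
          wgt Finset.univ y A * wgt Finset.univ (fun j => δ * x j) B * g (A ∪ B) := by
    have h := union_identity y (fun j => δ * x j) (Finset.univ : Finset J) g
    rw [mle]
    exact h.symm
  rw [hid]
  -- the per-A inner bound
  have inner : ∀ A : Finset J, (1 - ε) * g A + ε * V
      ≤ ∑ B ∈ (Finset.univ : Finset J).powerset, wgt Finset.univ (fun j => δ * x j) B * g (A ∪ B) := by
    intro A
    have m_nonneg : ∀ j : J, 0 ≤ g (insert j A) - g A := fun j => by
      have := hmono A (insert j A) (Finset.subset_insert j A)
      linarith
    have sum1 : ∑ B ∈ (Finset.univ : Finset J).powerset,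
          wgt Finset.univ (fun j => δ * x j) B * g (A ∪ B)
        = g A + ∑ B ∈ (Finset.univ : Finset J).powerset,
            wgt Finset.univ (fun j => δ * x j) B * (g (A ∪ B) - g A) := by
      simp only [mul_sub, Finset.sum_sub_distrib, ← Finset.sum_mul,
        wgt_sum_one, one_mul]
      ring
    have drop : ∑ j : J, wgt Finset.univ (fun k => δ * x k) {j} * (g (A ∪ {j}) - g A)
        ≤ ∑ B ∈ (Finset.univ : Finset J).powerset,
            wgt Finset.univ (fun k => δ * x k) B * (g (A ∪ B) - g A) := by
      have himg : ∑ j : J, wgt Finset.univ (fun k => δ * x k) {j} * (g (A ∪ {j}) - g A)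
          = ∑ B ∈ Finset.univ.image (fun j : J => ({j} : Finset J)),
              wgt Finset.univ (fun k => δ * x k) B * (g (A ∪ B) - g A) := by
        rw [Finset.sum_image]
        intro a _ b _ h
        exact Finset.singleton_injective h
      rw [himg]
      refine Finset.sum_le_sum_of_subset_of_nonneg ?_ ?_
      · intro B _; exact Finset.mem_powerset.2 (Finset.subset_univ B)
      · intro B _ _
        refine mul_nonneg (wgt_nonneg hp01 _ _) ?_
        have := hmono A (A ∪ B) Finset.subset_union_left
        linarith
    have single : ∀ j : J, ε * (x j * (g (insert j A) - g A))
        ≤ wgt Finset.univ (fun k => δ * x k) {j} * (g (A ∪ {j}) - g A) := by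
      intro j
      have hAj : A ∪ {j} = insert j A := by ext t; simp [or_comm]
      rw [hAj]
      have hw : ε * x j ≤ wgt Finset.univ (fun k => δ * x k) {j} := by
        simp only [wgt, Finset.prod_singleton]
        have h1 : (1 - δ) ^ N ≤ ∏ k ∈ Finset.univ \ {j}, (1 - δ * x k) := by
          calc (1 - δ) ^ N ≤ (1 - δ) ^ (Finset.univ \ ({j} : Finset J)).card := by
                refine pow_le_pow_of_le_one hδ' (by linarith) ?_
                rw [hN]
                exact Finset.card_le_univ _
            _ = ∏ k ∈ Finset.univ \ ({j} : Finset J), (1 - δ) := by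
                rw [Finset.prod_const]
            _ ≤ ∏ k ∈ Finset.univ \ ({j} : Finset J), (1 - δ * x k) := by
                refine Finset.prod_le_prod (fun k _ => hδ') (fun k _ => ?_)
                nlinarith [(hx k).1, (hx k).2]
        calc ε * x j = (δ * x j) * (1 - δ) ^ N := by rw [hε]; ring
          _ ≤ (δ * x j) * ∏ k ∈ Finset.univ \ {j}, (1 - δ * x k) :=
              mul_le_mul_of_nonneg_left h1 (hp01 j).1
      calc ε * (x j * (g (insert j A) - g A)) = (ε * x j) * (g (insert j A) - g A) := by ring
        _ ≤ wgt Finset.univ (fun k => δ * x k) {j} * (g (insert j A) - g A) :=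
            mul_le_mul_of_nonneg_right hw (m_nonneg j)
      
    have hsum_single : ε * ∑ j : J, x j * (g (insert j A) - g A)
        ≤ ∑ j : J, wgt Finset.univ (fun k => δ * x k) {j} * (g (A ∪ {j}) - g A) := by
      rw [Finset.mul_sum]
      exact Finset.sum_le_sum fun j _ => single j
    have hgain := gain g hmono hsub x α hα0 hα1 hmarg A
    rw [← hV] at hgain
    have hgain' : ε * (V - g A) ≤ ε * ∑ j : J, x j * (g (insert j A) - g A) :=
      mul_le_mul_of_nonneg_left hgain hε0
    rw [sum1]
    nlinarith [hsum_single, drop]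
  -- sum the per-A bound against the weights of y
  have lhs_eq : ∑ A ∈ (Finset.univ : Finset J).powerset,
        wgt Finset.univ y A * ((1 - ε) * g A + ε * V)
      = (1 - ε) * mle g y + ε * V := by
    have h1 : ∑ A ∈ (Finset.univ : Finset J).powerset,
          wgt Finset.univ y A * ((1 - ε) * g A + ε * V)
        = (1 - ε) * (∑ A ∈ (Finset.univ : Finset J).powerset, wgt Finset.univ y A * g A)
          + ε * V * ∑ A ∈ (Finset.univ : Finset J).powerset, wgt Finset.univ y A := by
      rw [Finset.mul_sum, Finset.mul_sum, ← Finset.sum_add_distrib]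
      exact Finset.sum_congr rfl fun A _ => by ring
    rw [h1, wgt_sum_one, mul_one, mle]
  calc (1 - ε) * mle g y + ε * V
      = ∑ A ∈ (Finset.univ : Finset J).powerset,
          wgt Finset.univ y A * ((1 - ε) * g A + ε * V) := lhs_eq.symm
    _ ≤ ∑ A ∈ (Finset.univ : Finset J).powerset,
          ∑ B ∈ (Finset.univ : Finset J).powerset,
            wgt Finset.univ y A * wgt Finset.univ (fun j => δ * x j) B * g (A ∪ B) := by
        refine Finset.sum_le_sum fun A _ => ?_
        have h2 : wgt Finset.univ y A * ((1 - ε) * g A + ε * V)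
            ≤ wgt Finset.univ y A * ∑ B ∈ (Finset.univ : Finset J).powerset,
                wgt Finset.univ (fun j => δ * x j) B * g (A ∪ B) :=
          mul_le_mul_of_nonneg_left (inner A) (wgt_nonneg hy _ _)
        refine h2.trans (le_of_eq ?_)
        rw [Finset.mul_sum]
        exact Finset.sum_congr rfl fun B _ => by ring

/-- Monotonicity consequence: combining with an extra independent set only helps. -/
lemma mono_final (g : Finset J → ℝ)
    (hmono : ∀ S T : Finset J, S ⊆ T → g S ≤ g T)
    (q s : J → ℝ) (hq : ∀ j, 0 ≤ q j ∧ q j ≤ 1) (hs : ∀ j, 0 ≤ s j ∧ s j ≤ 1) :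
    mle g q ≤ mle g (fun j => q j + s j - q j * s j) := by
  have hid : mle g (fun j => q j + s j - q j * s j)
      = ∑ A ∈ (Finset.univ : Finset J).powerset, ∑ B ∈ (Finset.univ : Finset J).powerset,
          wgt Finset.univ q A * wgt Finset.univ s B * g (A ∪ B) := by
    rw [mle]
    exact (union_identity q s (Finset.univ : Finset J) g).symm
  rw [hid, mle]
  have h1 : ∀ A ∈ (Finset.univ : Finset J).powerset,
      wgt Finset.univ q A * g A
        = ∑ B ∈ (Finset.univ : Finset J).powerset,
            wgt Finset.univ q A * wgt Finset.univ s B * g A := by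
    intro A _
    have : ∑ B ∈ (Finset.univ : Finset J).powerset,
        wgt Finset.univ q A * wgt Finset.univ s B * g A
        = (wgt Finset.univ q A * g A) * ∑ B ∈ (Finset.univ : Finset J).powerset,
            wgt Finset.univ s B := by
      rw [Finset.mul_sum]
      exact Finset.sum_congr rfl fun B _ => by ring
    rw [this, wgt_sum_one, mul_one]
  rw [Finset.sum_congr rfl h1]
  refine Finset.sum_le_sum fun A _ => Finset.sum_le_sum fun B _ => ?_
  exact mul_le_mul_of_nonneg_left (hmono A (A ∪ B) Finset.subset_union_left)
    (mul_nonneg (wgt_nonneg hq _ _) (wgt_nonneg hs _ _))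

end FintypeSide

end Stmt16Aux

theorem stmt_16 {J : Type*} [Fintype J] [DecidableEq J]
    (g : Finset J → ℝ) (hnn : ∀ S, 0 ≤ g S)
    (hmono : ∀ S T : Finset J, S ⊆ T → g S ≤ g T)
    (hsub : ∀ S T : Finset J, g (S ∪ T) + g (S ∩ T) ≤ g S + g T)
    (x : J → ℝ) (hx : ∀ j, 0 ≤ x j ∧ x j ≤ 1)
    (c : ℝ) (hc : 0 ≤ c ∧ c ≤ 1) :
    multilinearExt g (fun j => c * x j) ≥ (1 - Real.exp (-c)) * concaveClosure g x := by
  classical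
  open Stmt16Aux in
  rw [ge_iff_le, concaveClosure]
  set N := Fintype.card J with hN
  set G := multilinearExt g (fun j => c * x j) with hG
  have hcx : ∀ j, 0 ≤ c * x j ∧ c * x j ≤ 1 := fun j =>
    ⟨mul_nonneg hc.1 (hx j).1, by nlinarith [(hx j).1, (hx j).2, hc.1, hc.2]⟩
  have hGnn : 0 ≤ G := by rw [hG, mle_eq]; exact mle_nonneg g hnn hcx
  have hK0 : (0:ℝ) ≤ 1 - Real.exp (-c) := by
    have := Real.exp_le_one_iff.2 (by linarith [hc.1] : -c ≤ 0)
    linarith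
  -- the main estimate for each element of the defining set
  have key : ∀ v ∈ { v : ℝ | ∃ α : Finset J → ℝ, (∀ S, 0 ≤ α S) ∧
      (∑ S : Finset J, α S = 1) ∧
      (∀ j, ∑ S ∈ Finset.univ.filter (fun S : Finset J => j ∈ S), α S = x j) ∧
      v = ∑ S : Finset J, α S * g S }, (1 - Real.exp (-c)) * v ≤ G := by
    rintro v ⟨α, hα0, hα1, hmarg, rfl⟩
    set V := ∑ S : Finset J, α S * g S with hV
    have hV0 : 0 ≤ V := Finset.sum_nonneg fun S _ => mul_nonneg (hα0 S) (hnn S)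
    -- per-n bound
    have per_n : ∀ n : ℕ, 1 ≤ n →
        (1 - Real.exp (-(c * (1 - c / (n:ℝ)) ^ N))) * V ≤ G := by
      intro n hn
      have hn0 : (0:ℝ) < (n:ℝ) := by exact_mod_cast Nat.lt_of_lt_of_le Nat.zero_lt_one hn
      have hn1 : (1:ℝ) ≤ (n:ℝ) := by exact_mod_cast hn
      set δ := c / (n:ℝ) with hδ
      have hδ0 : 0 ≤ δ := div_nonneg hc.1 hn0.le
      have hδ1 : δ ≤ 1 := by
        rw [hδ, div_le_one hn0]; linarith [hc.2]
      have hnδ : (n:ℝ) * δ = c := by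
        rw [hδ]; field_simp
      set ε : ℝ := δ * (1 - δ) ^ N with hε
      have hε0 : 0 ≤ ε := mul_nonneg hδ0 (pow_nonneg (by linarith) _)
      have hε1 : ε ≤ 1 := by
        have := pow_le_one₀ (by linarith : (0:ℝ) ≤ 1 - δ) (by linarith : 1 - δ ≤ 1) (n := N)
        nlinarith
      have hδx : ∀ j, 0 ≤ δ * x j ∧ δ * x j ≤ 1 := fun j =>
        ⟨mul_nonneg hδ0 (hx j).1, by nlinarith [(hx j).1, (hx j).2]⟩
      -- the iterated points
      have hcube : ∀ m : ℕ, ∀ j, 0 ≤ 1 - (1 - δ * x j) ^ m ∧ 1 - (1 - δ * x j) ^ m ≤ 1 := by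
        intro m j
        have h1 : (0:ℝ) ≤ 1 - δ * x j := by linarith [(hδx j).2]
        have h2 : (1 - δ * x j) ^ m ≤ 1 := pow_le_one₀ h1 (by linarith [(hδx j).1])
        have h3 : (0:ℝ) ≤ (1 - δ * x j) ^ m := pow_nonneg h1 m
        constructor <;> linarith
      have hiter : ∀ m : ℕ,
          (1 - (1 - ε) ^ m) * V ≤ mle g (fun j => 1 - (1 - δ * x j) ^ m) := by
        intro m
        induction m with
        | zero =>
          simp only [pow_zero, sub_self, zero_mul]
          exact mle_nonneg g hnn (fun j => ⟨le_refl (0:ℝ), zero_le_one⟩)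
        | succ m ih =>
          have hstep := step g hnn hmono hsub x hx α hα0 hα1 hmarg δ hδ0 hδ1
            (fun j => 1 - (1 - δ * x j) ^ m) (hcube m)
          rw [← hV, ← hε] at hstep
          have hfun : (fun j => (1 - (1 - δ * x j) ^ m) + δ * x j
                - (1 - (1 - δ * x j) ^ m) * (δ * x j))
              = fun j => 1 - (1 - δ * x j) ^ (m + 1) := by
            funext j; ring
          rw [hfun] at hstep
          have h4 : (1 - ε) * ((1 - (1 - ε) ^ m) * V)
              ≤ (1 - ε) * mle g (fun j => 1 - (1 - δ * x j) ^ m) :=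
            mul_le_mul_of_nonneg_left ih (by linarith)
          have h5 : (1 - (1 - ε) ^ (m + 1)) * V
              = (1 - ε) * ((1 - (1 - ε) ^ m) * V) + ε * V := by ring
          linarith
      -- compare the n-th iterate with c • x
      set z : J → ℝ := fun j => 1 - (1 - δ * x j) ^ n with hz
      have hzx : ∀ j, z j ≤ c * x j := by
        intro j
        have h1 : (-2:ℝ) ≤ -(δ * x j) := by linarith [(hδx j).2]
        have h2 := one_add_mul_le_pow h1 n
        have h3 : (1:ℝ) + (n:ℝ) * (-(δ * x j)) = 1 - (n * δ) * x j := by ring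
        rw [h3, hnδ] at h2
        have : (1 + -(δ * x j)) = 1 - δ * x j := by ring
        rw [this] at h2
        simp only [hz]
        linarith
      set s : J → ℝ := fun j => if (1 - δ * x j) ^ n = 0 then 0
          else (c * x j - z j) / ((1 - δ * x j) ^ n) with hs
      have hDnn : ∀ j, (0:ℝ) ≤ (1 - δ * x j) ^ n := fun j =>
        pow_nonneg (by linarith [(hδx j).2]) n
      have hzD : ∀ j, 1 - z j = (1 - δ * x j) ^ n := fun j => by simp [hz]
      have hs01 : ∀ j, 0 ≤ s j ∧ s j ≤ 1 := by
        intro j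
        by_cases hD : (1 - δ * x j) ^ n = 0
        · simp [hs, hD]
        · have hDpos : 0 < (1 - δ * x j) ^ n := lt_of_le_of_ne (hDnn j) (Ne.symm hD)
          have hnum0 : 0 ≤ c * x j - z j := by linarith [hzx j]
          have hnum1 : c * x j - z j ≤ (1 - δ * x j) ^ n := by
            have := (hcx j).2
            have h6 := hzD j
            linarith
          simp only [hs, if_neg hD]
          exact ⟨div_nonneg hnum0 hDpos.le, (div_le_one hDpos).2 hnum1⟩
      have hqs : (fun j => z j + s j - z j * s j) = fun j => c * x j := by
        funext j
        by_cases hD : (1 - δ * x j) ^ n = 0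
        · have h7 : z j = 1 := by
            have := hzD j; rw [hD] at this; linarith
          have h8 : c * x j = 1 := by
            have h9 := hzx j
            have := (hcx j).2
            rw [h7] at h9
            linarith
          simp [hs, hD, h7, h8]
        · have h10 : z j + s j - z j * s j = z j + (1 - z j) * s j := by ring
          rw [h10, hzD j]
          simp only [hs, if_neg hD]
          field_simp
          ring
      have hmono_fin := mono_final g hmono z s (hcube n) hs01
      rw [hqs] at hmono_fin
      have hGz : mle g z ≤ G := by
        rw [hG, mle_eq]; exact hmono_fin
      -- exponential estimate
      have hexp : (1 - ε) ^ n ≤ Real.exp (-(c * (1 - δ) ^ N)) := by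
        have h11 : 1 - ε ≤ Real.exp (-ε) := by
          have := Real.add_one_le_exp (-ε)
          linarith
        have h12 : (1 - ε) ^ n ≤ (Real.exp (-ε)) ^ n :=
          pow_le_pow_left₀ (by linarith) h11 n
        have h13 : (Real.exp (-ε)) ^ n = Real.exp ((n:ℝ) * (-ε)) :=
          (Real.exp_nat_mul _ n).symm
        have h14 : (n:ℝ) * (-ε) = -(c * (1 - δ) ^ N) := by
          rw [hε]
          calc (n:ℝ) * -(δ * (1 - δ) ^ N) = -(((n:ℝ) * δ) * (1 - δ) ^ N) := by ring
            _ = -(c * (1 - δ) ^ N) := by rw [hnδ]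
        rw [h13, h14] at h12
        exact h12
      have h15 : (1 - Real.exp (-(c * (1 - δ) ^ N))) * V ≤ (1 - (1 - ε) ^ n) * V := by
        apply mul_le_mul_of_nonneg_right _ hV0
        linarith
      calc (1 - Real.exp (-(c * (1 - c / (n:ℝ)) ^ N))) * V
          = (1 - Real.exp (-(c * (1 - δ) ^ N))) * V := by rw [hδ]
        _ ≤ (1 - (1 - ε) ^ n) * V := h15
        _ ≤ mle g z := hiter n
        _ ≤ G := hGz
    -- pass to the limit n → ∞
    have h1 : Filter.Tendsto (fun n : ℕ => c / (n:ℝ)) Filter.atTop (nhds 0) :=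
      tendsto_const_div_atTop_nhds_zero_nat c
    have h2 : Filter.Tendsto (fun n : ℕ => (1 - c / (n:ℝ)) ^ N) Filter.atTop (nhds 1) := by
      have h3 : Filter.Tendsto (fun n : ℕ => 1 - c / (n:ℝ)) Filter.atTop (nhds 1) := by
        have := Filter.Tendsto.sub (tendsto_const_nhds (x := (1:ℝ))) h1
        simpa using this
      have := h3.pow N
      simpa using this
    have h4 : Filter.Tendsto (fun n : ℕ => -(c * (1 - c / (n:ℝ)) ^ N)) Filter.atTop
        (nhds (-c)) := by
      have := (Filter.Tendsto.mul (tendsto_const_nhds (x := c)) h2).neg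
      simpa using this
    have h5 : Filter.Tendsto
        (fun n : ℕ => (1 - Real.exp (-(c * (1 - c / (n:ℝ)) ^ N))) * V)
        Filter.atTop (nhds ((1 - Real.exp (-c)) * V)) := by
      have h6 := (Real.continuous_exp.tendsto (-c)).comp h4
      exact (Filter.Tendsto.sub (tendsto_const_nhds (x := (1:ℝ))) h6).mul tendsto_const_nhds
    exact le_of_tendsto h5 (Filter.eventually_atTop.2 ⟨1, fun n hn => per_n n hn⟩)
  -- conclude via sSup
  rcases eq_or_lt_of_le hK0 with h0 | hKpos
  · rw [← h0, zero_mul]; exact hGnn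
  · have hsup : sSup { v : ℝ | ∃ α : Finset J → ℝ, (∀ S, 0 ≤ α S) ∧
        (∑ S : Finset J, α S = 1) ∧
        (∀ j, ∑ S ∈ Finset.univ.filter (fun S : Finset J => j ∈ S), α S = x j) ∧
        v = ∑ S : Finset J, α S * g S } ≤ G / (1 - Real.exp (-c)) := by
      refine Real.sSup_le (fun v hv => ?_) (div_nonneg hGnn hK0)
      rw [le_div_iff₀ hKpos]
      have := key v hv
      linarith
    calc (1 - Real.exp (-c)) * sSup _ ≤ (1 - Real.exp (-c)) * (G / (1 - Real.exp (-c))) :=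
        mul_le_mul_of_nonneg_left hsup hK0
      _ = G := by field_simp
end

section
/- Let J be a finite set, let g : 2^J → ℝ be a nonnegative monotone submodular set function, and let x ∈ [0,1]^J. Define g*(x) = min_{S⊆J} ( g(S) + Σ_{j∈J} x_j · (g(S ∪ {j}) − g(S)) ). Then g*(x) ≥ g⁺(x), where g⁺ is the concave closure of g. -/
/-- `g*(x) = min_{S ⊆ J} (g(S) + Σ_j x_j (g(S ∪ {j}) − g(S)))`. -/
noncomputable def gStar {J : Type*} [Fintype J] [DecidableEq J]
    (g : Finset J → ℝ) (x : J → ℝ) : ℝ :=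
  ⨅ S : Finset J, (g S + ∑ j, x j * (g (insert j S) - g S))

lemma key_lemma {J : Type*} [Fintype J] [DecidableEq J]
    (g : Finset J → ℝ)
    (hmono : ∀ S T : Finset J, S ⊆ T → g S ≤ g T)
    (hsub : ∀ S T : Finset J, g (S ∪ T) + g (S ∩ T) ≤ g S + g T)
    (S T : Finset J) :
    g (S ∪ T) ≤ g S + ∑ j ∈ T, (g (insert j S) - g S) := by
  induction T using Finset.induction with
  | empty => simp
  | @insert a T' ha ih =>
    rw [Finset.sum_insert ha]
    have h1 : g (S ∪ insert a T') ≤ g (S ∪ T') + g (insert a S) - g S := by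
      have hsub1 := hsub (S ∪ T') (insert a S)
      have hu : (S ∪ T') ∪ insert a S = S ∪ insert a T' := by
        ext j; simp [Finset.mem_union, Finset.mem_insert]; tauto
      have hi : S ⊆ (S ∪ T') ∩ insert a S := by
        intro j hj; simp [Finset.mem_inter, Finset.mem_union, Finset.mem_insert, hj]
      rw [hu] at hsub1
      linarith [hmono _ _ hi]
    linarith

theorem stmt_17 {J : Type*} [Fintype J] [DecidableEq J]
    (g : Finset J → ℝ) (hnn : ∀ S, 0 ≤ g S)
    (hmono : ∀ S T : Finset J, S ⊆ T → g S ≤ g T)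
    (hsub : ∀ S T : Finset J, g (S ∪ T) + g (S ∩ T) ≤ g S + g T)
    (x : J → ℝ) (hx : ∀ j, 0 ≤ x j ∧ x j ≤ 1) :
    gStar g x ≥ concaveClosure g x := by
  rw [ge_iff_le, concaveClosure]
  have hd : ∀ (S : Finset J) (j : J), 0 ≤ g (insert j S) - g S := by
    intro S j
    have := hmono S (insert j S) (Finset.subset_insert j S)
    linarith
  have hgstar_nonneg : 0 ≤ gStar g x := by
    apply le_ciInf
    intro S
    have : 0 ≤ ∑ j, x j * (g (insert j S) - g S) :=
      Finset.sum_nonneg fun j _ => mul_nonneg (hx j).1 (hd S j)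
    linarith [hnn S]
  apply Real.sSup_le _ hgstar_nonneg
  rintro v ⟨α, hα0, hα1, hmarg, rfl⟩
  apply le_ciInf
  intro S
  -- main bound: ∑ T, α T * g T ≤ g S + ∑ j, x j * (g (insert j S) - g S)
  have bound : ∀ T : Finset J, α T * g T ≤
      α T * g S + ∑ j ∈ T, α T * (g (insert j S) - g S) := by
    intro T
    have h1 : g T ≤ g (S ∪ T) := hmono T (S ∪ T) Finset.subset_union_right
    have h2 := key_lemma g hmono hsub S T
    calc α T * g T ≤ α T * (g S + ∑ j ∈ T, (g (insert j S) - g S)) := by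
          apply mul_le_mul_of_nonneg_left (by linarith) (hα0 T)
      _ = α T * g S + ∑ j ∈ T, α T * (g (insert j S) - g S) := by
          rw [mul_add, Finset.mul_sum]
  calc ∑ T : Finset J, α T * g T
      ≤ ∑ T : Finset J, (α T * g S + ∑ j ∈ T, α T * (g (insert j S) - g S)) :=
        Finset.sum_le_sum fun T _ => bound T
    _ = g S + ∑ j, x j * (g (insert j S) - g S) := by
        rw [Finset.sum_add_distrib]
        congr 1
        · rw [← Finset.sum_mul, hα1, one_mul]
        · have : ∀ T : Finset J, ∑ j ∈ T, α T * (g (insert j S) - g S)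
              = ∑ j : J, if j ∈ T then α T * (g (insert j S) - g S) else 0 := by
            intro T
            rw [Finset.sum_ite_mem, Finset.univ_inter]
          simp_rw [this]
          rw [Finset.sum_comm]
          apply Finset.sum_congr rfl
          intro j _
          rw [← Finset.sum_filter, ← Finset.sum_mul, hmarg j]
end
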